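/- arXiv:1308.5849 — 10 statements merged into one kernel-verified Lean document; each statement's English description precedes it below -/
import Mathlib

section
/- Let k, l, m be natural numbers and let H₁, H₂, …, H_m be m pairwise distinct sets. If m > (k+l choose l), then at least one of the following holds: (i) among the H_i's one can find a (k+1)-increasing sequence of k+2 of the sets, i.e. indices i₁,…,i_{k+2} with H_{i₁} ⊊ H_{i₁}∪H_{i₂} ⊊ … ⊊ H_{i₁}∪…∪H_{i_{k+2}}; or (ii) among the H_i's one can find an (l+1)-decreasing sequence of l+2 of the sets, i.e. indices i₁,…,i_{l+2} with H_{i₁} ⊋ H_{i₁}∩H_{i₂} ⊋ … ⊋ H_{i₁}∩…∩H_{i_{l+2}}. -/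
open Finset
attribute [local instance] Classical.propDecidable

section Aux

variable {α : Type*}

/-- There is a sequence in `F` whose partial unions strictly increase `n` times. -/
def IncSeq (n : ℕ) (F : Finset (Set α)) : Prop :=
  ∃ i : ℕ → Set α, (∀ s, i s ∈ F) ∧
    ∀ t < n, (⋃ s ∈ Finset.range (t + 1), i s) ⊂ ⋃ s ∈ Finset.range (t + 2), i s

/-- There is a sequence in `F` whose partial intersections strictly decrease `n` times. -/
def DecSeq (n : ℕ) (F : Finset (Set α)) : Prop :=
  ∃ i : ℕ → Set α, (∀ s, i s ∈ F) ∧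
    ∀ t < n, (⋂ s ∈ Finset.range (t + 2), i s) ⊂ ⋂ s ∈ Finset.range (t + 1), i s

lemma biUnion_range_congr {i j : ℕ → Set α} {n : ℕ} (h : ∀ s < n, i s = j s) :
    (⋃ s ∈ Finset.range n, i s) = ⋃ s ∈ Finset.range n, j s := by
  ext x
  simp only [Set.mem_iUnion, Finset.mem_range]
  exact ⟨fun ⟨s, hs, hx⟩ => ⟨s, hs, h s hs ▸ hx⟩, fun ⟨s, hs, hx⟩ => ⟨s, hs, (h s hs).symm ▸ hx⟩⟩

lemma biInter_range_congr {i j : ℕ → Set α} {n : ℕ} (h : ∀ s < n, i s = j s) :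
    (⋂ s ∈ Finset.range n, i s) = ⋂ s ∈ Finset.range n, j s := by
  ext x
  simp only [Set.mem_iInter, Finset.mem_range]
  exact ⟨fun hx s hs => h s hs ▸ hx s hs, fun hx s hs => (h s hs).symm ▸ hx s hs⟩

lemma biUnion_range_succ (i : ℕ → Set α) (n : ℕ) :
    (⋃ s ∈ Finset.range (n + 1), i s) = i n ∪ ⋃ s ∈ Finset.range n, i s := by
  rw [Finset.range_add_one, Finset.set_biUnion_insert]

lemma biInter_range_succ (i : ℕ → Set α) (n : ℕ) :
    (⋂ s ∈ Finset.range (n + 1), i s) = i n ∩ ⋂ s ∈ Finset.range n, i s := by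
  rw [Finset.range_add_one, Finset.set_biInter_insert]

lemma IncSeq.mono {n : ℕ} {F G : Finset (Set α)} (h : IncSeq n F) (hFG : F ⊆ G) :
    IncSeq n G := by
  obtain ⟨i, hi, hs⟩ := h
  exact ⟨i, fun s => hFG (hi s), hs⟩

lemma DecSeq.mono {n : ℕ} {F G : Finset (Set α)} (h : DecSeq n F) (hFG : F ⊆ G) :
    DecSeq n G := by
  obtain ⟨i, hi, hs⟩ := h
  exact ⟨i, fun s => hFG (hi s), hs⟩

/-- A decreasing sequence of sets all containing `x` can be extended by a set missing `x`. -/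
lemma decseq_extend {F : Finset (Set α)} {x : α} {B : Set α} (hB : B ∈ F) (hxB : x ∉ B)
    {n : ℕ} (h : DecSeq n (F.filter (fun S => x ∈ S))) : DecSeq (n + 1) F := by
  obtain ⟨i, hi, hs⟩ := h
  have hiF : ∀ s, i s ∈ F := fun s => (Finset.mem_filter.mp (hi s)).1
  have hix : ∀ s, x ∈ i s := fun s => (Finset.mem_filter.mp (hi s)).2
  refine ⟨fun s => if s < n + 1 then i s else B, fun s => ?_, fun t ht => ?_⟩
  · by_cases hc : s < n + 1 <;> simp [hc, hiF, hB]
  · rcases Nat.lt_succ_iff_lt_or_eq.mp ht with ht' | rfl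
    · have e1 : (⋂ s ∈ Finset.range (t + 1), (if s < n + 1 then i s else B)) =
          ⋂ s ∈ Finset.range (t + 1), i s :=
        biInter_range_congr (fun s hs => by rw [if_pos (by omega)])
      have e2 : (⋂ s ∈ Finset.range (t + 2), (if s < n + 1 then i s else B)) =
          ⋂ s ∈ Finset.range (t + 2), i s :=
        biInter_range_congr (fun s hs => by rw [if_pos (by omega)])
      rw [e1, e2]
      exact hs t ht'
    · have e1 : (⋂ s ∈ Finset.range (t + 1), (if s < t + 1 then i s else B)) =
          ⋂ s ∈ Finset.range (t + 1), i s :=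
        biInter_range_congr (fun s hs => by rw [if_pos (by omega)])
      have e2 : (⋂ s ∈ Finset.range (t + 2), (if s < t + 1 then i s else B)) =
          B ∩ ⋂ s ∈ Finset.range (t + 1), i s := by
        rw [biInter_range_succ, if_neg (by omega), e1]
      rw [e1, e2]
      have hxI : x ∈ ⋂ s ∈ Finset.range (t + 1), i s := by
        simp only [Set.mem_iInter]
        exact fun s _ => hix s
      exact ⟨Set.inter_subset_right, fun hle => hxB (hle hxI).1⟩

/-- An increasing sequence of sets all missing `x` can be extended by a set containing `x`. -/
lemma incseq_extend {F : Finset (Set α)} {x : α} {A : Set α} (hA : A ∈ F) (hxA : x ∈ A)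
    {n : ℕ} (h : IncSeq n (F.filter (fun S => x ∉ S))) : IncSeq (n + 1) F := by
  obtain ⟨i, hi, hs⟩ := h
  have hiF : ∀ s, i s ∈ F := fun s => (Finset.mem_filter.mp (hi s)).1
  have hix : ∀ s, x ∉ i s := fun s => (Finset.mem_filter.mp (hi s)).2
  refine ⟨fun s => if s < n + 1 then i s else A, fun s => ?_, fun t ht => ?_⟩
  · by_cases hc : s < n + 1 <;> simp [hc, hiF, hA]
  · rcases Nat.lt_succ_iff_lt_or_eq.mp ht with ht' | rfl
    · have e1 : (⋃ s ∈ Finset.range (t + 1), (if s < n + 1 then i s else A)) =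
          ⋃ s ∈ Finset.range (t + 1), i s :=
        biUnion_range_congr (fun s hs => by rw [if_pos (by omega)])
      have e2 : (⋃ s ∈ Finset.range (t + 2), (if s < n + 1 then i s else A)) =
          ⋃ s ∈ Finset.range (t + 2), i s :=
        biUnion_range_congr (fun s hs => by rw [if_pos (by omega)])
      rw [e1, e2]
      exact hs t ht'
    · have e1 : (⋃ s ∈ Finset.range (t + 1), (if s < t + 1 then i s else A)) =
          ⋃ s ∈ Finset.range (t + 1), i s :=
        biUnion_range_congr (fun s hs => by rw [if_pos (by omega)])
      have e2 : (⋃ s ∈ Finset.range (t + 2), (if s < t + 1 then i s else A)) =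
          A ∪ ⋃ s ∈ Finset.range (t + 1), i s := by
        rw [biUnion_range_succ, if_neg (by omega), e1]
      rw [e1, e2]
      have hxI : x ∉ ⋃ s ∈ Finset.range (t + 1), i s := by
        intro hmem
        obtain ⟨s, _, hx⟩ := Set.mem_iUnion₂.mp hmem
        exact hix s hx
      exact ⟨Set.subset_union_right, fun hle => hxI (hle (Set.mem_union_left _ hxA))⟩

lemma pair_union : ∀ (A B : Set α), (⋃ s ∈ Finset.range 1, (if s = 0 then A else B)) = A ∧
    (⋃ s ∈ Finset.range 2, (if s = 0 then A else B)) = B ∪ A := by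
  intro A B
  constructor
  · rw [biUnion_range_succ]
    simp
  · rw [biUnion_range_succ, biUnion_range_succ]
    simp

lemma pair_inter : ∀ (A B : Set α), (⋂ s ∈ Finset.range 1, (if s = 0 then A else B)) = A ∧
    (⋂ s ∈ Finset.range 2, (if s = 0 then A else B)) = B ∩ A := by
  intro A B
  constructor
  · rw [biInter_range_succ]
    simp
  · rw [biInter_range_succ, biInter_range_succ]
    simp

lemma card_le_one_of_noInc {F : Finset (Set α)} (h : ¬ IncSeq 1 F) : F.card ≤ 1 := by
  have key : ∀ A ∈ F, ∀ B ∈ F, B ⊆ A := by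
    intro A hA B hB
    by_contra hnot
    apply h
    refine ⟨fun s => if s = 0 then A else B, fun s => by by_cases hc : s = 0 <;> simp [hc, hA, hB],
      fun t ht => ?_⟩
    interval_cases t
    rw [(pair_union A B).1, (pair_union A B).2]
    exact ⟨Set.subset_union_right, fun hle => hnot (fun y hy => hle (Set.mem_union_left _ hy))⟩
  rw [Finset.card_le_one]
  intro A hA B hB
  exact Set.Subset.antisymm (key B hB A hA) (key A hA B hB)

lemma card_le_one_of_noDec {F : Finset (Set α)} (h : ¬ DecSeq 1 F) : F.card ≤ 1 := by
  have key : ∀ A ∈ F, ∀ B ∈ F, A ⊆ B := by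
    intro A hA B hB
    by_contra hnot
    apply h
    refine ⟨fun s => if s = 0 then A else B, fun s => by by_cases hc : s = 0 <;> simp [hc, hA, hB],
      fun t ht => ?_⟩
    interval_cases t
    rw [(pair_inter A B).1, (pair_inter A B).2]
    exact ⟨Set.inter_subset_right, fun hle => hnot (fun y hy => (hle hy).1)⟩
  rw [Finset.card_le_one]
  intro A hA B hB
  exact Set.Subset.antisymm (key A hA B hB) (key B hB A hA)

lemma count_lemma (N : ℕ) : ∀ k l : ℕ, ∀ F : Finset (Set α), k + l ≤ N →
    ¬ IncSeq (k + 1) F → ¬ DecSeq (l + 1) F → F.card ≤ (k + l).choose l := by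
  induction N with
  | zero =>
    intro k l F hN hI hD
    obtain ⟨rfl, rfl⟩ : k = 0 ∧ l = 0 := by omega
    simpa using card_le_one_of_noInc hI
  | succ N ih =>
    intro k l F hN hI hD
    match k, l with
    | 0, l =>
      have := card_le_one_of_noInc hI
      simpa using this
    | k + 1, 0 =>
      have := card_le_one_of_noDec hD
      simpa using this
    | k + 1, l + 1 =>
      by_cases h1 : F.card ≤ 1
      · exact h1.trans (Nat.choose_pos (show l + 1 ≤ k + 1 + (l + 1) by omega))
      · obtain ⟨A, hA, B, hB, hAB⟩ := Finset.one_lt_card.mp (not_le.mp h1)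
        have hx : ∃ x, (x ∈ A ∧ x ∉ B) ∨ (x ∈ B ∧ x ∉ A) := by
          by_contra hc
          push_neg at hc
          apply hAB
          ext y
          have := hc y
          tauto
        -- reduce to the case x ∈ A, x ∉ B with A B ∈ F
        obtain ⟨x, hcase⟩ := hx
        have main : ∀ A B : Set α, A ∈ F → B ∈ F → x ∈ A → x ∉ B →
            F.card ≤ (k + 1 + (l + 1)).choose (l + 1) := by
          intro A B hA hB hxA hxB
          have hDx : ¬ DecSeq (l + 1) (F.filter (fun S => x ∈ S)) :=
            fun hd => hD (decseq_extend hB hxB hd)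
          have hIx : ¬ IncSeq (k + 1 + 1) (F.filter (fun S => x ∈ S)) :=
            fun hi => hI (hi.mono (Finset.filter_subset _ _))
          have hIn : ¬ IncSeq (k + 1) (F.filter (fun S => x ∉ S)) :=
            fun hi => hI (incseq_extend hA hxA hi)
          have hDn : ¬ DecSeq (l + 1 + 1) (F.filter (fun S => x ∉ S)) :=
            fun hd => hD (hd.mono (Finset.filter_subset _ _))
          have c1 : (F.filter (fun S => x ∈ S)).card ≤ (k + 1 + l).choose l :=
            ih (k + 1) l _ (by omega) hIx hDx
          have c2 : (F.filter (fun S => x ∉ S)).card ≤ (k + (l + 1)).choose (l + 1) :=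
            ih k (l + 1) _ (by omega) hIn hDn
          have hsplit : (F.filter (fun S => x ∈ S)).card +
              (F.filter (fun S => x ∉ S)).card = F.card :=
            Finset.card_filter_add_card_filter_not _
          have hpascal : (k + 1 + (l + 1)).choose (l + 1) =
              (k + 1 + l).choose l + (k + (l + 1)).choose (l + 1) := by
            have : k + 1 + (l + 1) = (k + l + 1) + 1 := by omega
            rw [this, Nat.choose_succ_succ (k + l + 1) l]
            congr 2 <;> omega
          omega
        rcases hcase with ⟨hxA, hxB⟩ | ⟨hxB, hxA⟩
        · exact main A B hA hB hxA hxB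
        · exact main B A hB hA hxB hxA

end Aux

/-- **Lemma 1.** In any collection of more than `(k+l).choose l` pairwise distinct
sets one finds a `(k+1)`-increasing sequence of `k+2` sets or an `(l+1)`-decreasing
sequence of `l+2` sets. -/
theorem increasing_or_decreasing_sequence {α : Type*} (k l m : ℕ) (H : Fin m → Set α)
    (hdist : Function.Injective H) (hm : m > (k + l).choose l) :
    (∃ i : ℕ → Fin m, ∀ t < k + 1,
      (⋃ s ∈ Finset.range (t + 1), H (i s)) ⊂ ⋃ s ∈ Finset.range (t + 2), H (i s)) ∨
    (∃ i : ℕ → Fin m, ∀ t < l + 1,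
      (⋂ s ∈ Finset.range (t + 2), H (i s)) ⊂ ⋂ s ∈ Finset.range (t + 1), H (i s)) := by
  by_contra hc
  push_neg at hc
  obtain ⟨hnoInc, hnoDec⟩ := hc
  set F : Finset (Set α) := Finset.image H Finset.univ with hF
  have hcard : F.card = m := by
    rw [hF, Finset.card_image_of_injective _ hdist, Finset.card_univ, Fintype.card_fin]
  have hmem : ∀ S ∈ F, ∃ a : Fin m, H a = S := by
    intro S hS
    simpa [hF] using hS
  have hI : ¬ IncSeq (k + 1) F := by
    rintro ⟨i, hi, hs⟩
    choose j hj using fun s => hmem (i s) (hi s)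
    obtain ⟨t, ht, hcontra⟩ := hnoInc j
    apply hcontra
    have e1 : (⋃ s ∈ Finset.range (t + 1), H (j s)) = ⋃ s ∈ Finset.range (t + 1), i s :=
      biUnion_range_congr (fun s _ => hj s)
    have e2 : (⋃ s ∈ Finset.range (t + 2), H (j s)) = ⋃ s ∈ Finset.range (t + 2), i s :=
      biUnion_range_congr (fun s _ => hj s)
    rw [e1, e2]
    exact hs t ht
  have hD : ¬ DecSeq (l + 1) F := by
    rintro ⟨i, hi, hs⟩
    choose j hj using fun s => hmem (i s) (hi s)
    obtain ⟨t, ht, hcontra⟩ := hnoDec j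
    apply hcontra
    have e1 : (⋂ s ∈ Finset.range (t + 1), H (j s)) = ⋂ s ∈ Finset.range (t + 1), i s :=
      biInter_range_congr (fun s _ => hj s)
    have e2 : (⋂ s ∈ Finset.range (t + 2), H (j s)) = ⋂ s ∈ Finset.range (t + 2), i s :=
      biInter_range_congr (fun s _ => hj s)
    rw [e1, e2]
    exact hs t ht
  have := count_lemma (k + l) k l F le_rfl hI hD
  omega
end

section
/- Let 𝓗 = {H₁, H₂, …} be a countably infinite collection of pairwise distinct sets. Then at least one of the following holds: (i) among the H_i's one can find an infinite increasing sequence (H_{i₁}, H_{i₂}, …), i.e. H_{i₁} ⊊ H_{i₁}∪H_{i₂} ⊊ H_{i₁}∪H_{i₂}∪H_{i₃} ⊊ …; or (ii) among the H_i's one can find an infinite decreasing sequence (H_{i₁}, H_{i₂}, …), i.e. H_{i₁} ⊋ H_{i₁}∩H_{i₂} ⊋ H_{i₁}∩H_{i₂}∩H_{i₃} ⊋ …, where the indices i₁, i₂, … are pairwise distinct. -/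
open Set

section BauslaughAux

variable {α : Type*}

/-- The "increasing sequence" alternative. -/
private def Incr (H : ℕ → Set α) : Prop :=
  ∃ i : ℕ → ℕ, Function.Injective i ∧ ∀ t : ℕ,
    (⋃ s ∈ Finset.range (t + 1), H (i s)) ⊂ ⋃ s ∈ Finset.range (t + 2), H (i s)

private lemma incr_of_witness (H : ℕ → Set α) (i : ℕ → ℕ) (hi : Function.Injective i)
    (hw : ∀ t : ℕ, ∃ x, x ∈ H (i (t + 1)) ∧ ∀ s, s ≤ t → x ∉ H (i s)) : Incr H := by
  refine ⟨i, hi, fun t => ?_⟩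
  obtain ⟨x, hx1, hx2⟩ := hw t
  constructor
  · intro y hy
    simp only [Set.mem_iUnion, Finset.mem_range] at hy ⊢
    obtain ⟨s, hs, hys⟩ := hy
    exact ⟨s, by omega, hys⟩
  · intro hsub
    have hxR : x ∈ ⋃ s ∈ Finset.range (t + 2), H (i s) := by
      simp only [Set.mem_iUnion, Finset.mem_range]
      exact ⟨t + 1, by omega, hx1⟩
    have := hsub hxR
    simp only [Set.mem_iUnion, Finset.mem_range] at this
    obtain ⟨s, hs, hxs⟩ := this
    exact hx2 s (by omega) hxs

/-- If there is no increasing sequence, every (trace) family has a finite "basis". -/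
private lemma exists_basis (H : ℕ → Set α) (hninc : ¬ Incr H) (T : Set α) (J : Set ℕ) :
    ∃ F : Finset ℕ, ↑F ⊆ J ∧ ∀ j ∈ J, H j ∩ T ⊆ ⋃ g ∈ F, (H g ∩ T) := by
  by_contra hcon
  push_neg at hcon
  -- hcon : ∀ F, ↑F ⊆ J → ∃ j ∈ J, ¬ (H j ∩ T ⊆ ⋃ ...)
  have hcon' : ∀ F : {F : Finset ℕ // ↑F ⊆ J},
      ∃ j, j ∈ J ∧ ¬ (H j ∩ T ⊆ ⋃ g ∈ F.1, (H g ∩ T)) := by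
    intro F
    obtain ⟨j, hj1, hj2⟩ := hcon F.1 F.2
    exact ⟨j, hj1, hj2⟩
  choose pick hpickJ hpick using hcon'
  let ext : {F : Finset ℕ // ↑F ⊆ J} → {F : Finset ℕ // ↑F ⊆ J} :=
    fun F => ⟨insert (pick F) F.1, by
      intro x hx
      simp only [Finset.coe_insert, Set.mem_insert_iff] at hx
      rcases hx with h | h
      · rw [h]; exact hpickJ F
      · exact F.2 h⟩
  let Fs : ℕ → {F : Finset ℕ // ↑F ⊆ J} := fun n => Nat.rec ⟨∅, by simp⟩ (fun _ F => ext F) n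
  let i : ℕ → ℕ := fun n => pick (Fs n)
  have hFs_succ : ∀ n, (Fs (n + 1)).1 = insert (i n) (Fs n).1 := fun n => rfl
  have hmem : ∀ s t, s < t → i s ∈ (Fs t).1 := by
    intro s t hst
    induction t with
    | zero => omega
    | succ t ih =>
      rw [hFs_succ, Finset.mem_insert]
      rcases Nat.lt_succ_iff_lt_or_eq.mp hst with h | h
      · exact Or.inr (ih h)
      · exact Or.inl (by rw [h])
  have hnotmem : ∀ t, i t ∉ (Fs t).1 := by
    intro t hmem'
    apply hpick (Fs t)
    intro x hx
    exact Set.mem_iUnion₂.mpr ⟨i t, hmem', hx⟩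
  have hinj : Function.Injective i := by
    have key : ∀ m n, m < n → i n ≠ i m := by
      intro m n h hne
      exact hnotmem n (hne ▸ hmem m n h)
    intro a b hab
    rcases lt_trichotomy a b with h | h | h
    · exact absurd hab.symm (key a b h)
    · exact h
    · exact absurd hab (key b a h)
  apply hninc
  apply incr_of_witness H i hinj
  intro t
  have hns := hpick (Fs (t + 1))
  rw [Set.not_subset] at hns
  obtain ⟨x, hx1, hx2⟩ := hns
  refine ⟨x, hx1.1, fun s hs hxs => ?_⟩
  exact hx2 (Set.mem_iUnion₂.mpr ⟨i s, hmem s (t + 1) (by omega), hxs, hx1.2⟩)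

private lemma finite_image_biUnion (H : ℕ → Set α) (T : Set α) (J : Set ℕ) (F : Finset ℕ)
    (h : ∀ g ∈ F, ((fun j => H j ∩ T ∩ H g) '' J).Finite) :
    ((fun j => ⋃ g ∈ F, (H j ∩ T ∩ H g)) '' J).Finite := by
  classical
  induction F using Finset.induction_on with
  | empty =>
    apply Set.Finite.subset (Set.finite_singleton (∅ : Set α))
    rintro S ⟨j, _, rfl⟩
    simp
  | @insert a s ha ih =>
    have hsub : ((fun j => ⋃ g ∈ insert a s, (H j ∩ T ∩ H g)) '' J) ⊆
        Set.image2 (· ∪ ·) ((fun j => H j ∩ T ∩ H a) '' J)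
          ((fun j => ⋃ g ∈ s, (H j ∩ T ∩ H g)) '' J) := by
      rintro S ⟨j, hj, rfl⟩
      show (⋃ g ∈ insert a s, (H j ∩ T ∩ H g)) ∈ _
      rw [Finset.set_biUnion_insert]
      exact Set.mem_image2_of_mem ⟨j, hj, rfl⟩ ⟨j, hj, rfl⟩
    exact (Set.Finite.image2 _ (h a (Finset.mem_insert_self a s))
      (ih fun g hg => h g (Finset.mem_insert_of_mem hg))).subset hsub

/-- Key step: from a good state (T, J) produce g ∈ J and a new good state inside T ∩ H g. -/
private lemma step_lemma (H : ℕ → Set α) (hninc : ¬ Incr H) (T : Set α) (J : Set ℕ)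
    (hJinf : J.Infinite) (hproper : ∀ j ∈ J, H j ∩ T ⊂ T)
    (hinj : Set.InjOn (fun j => H j ∩ T) J) :
    ∃ g ∈ J, ∃ J' : Set ℕ, (T ∩ H g ⊂ T) ∧ J'.Infinite ∧
      (∀ j ∈ J', H j ∩ (T ∩ H g) ⊂ T ∩ H g) ∧
      Set.InjOn (fun j => H j ∩ (T ∩ H g)) J' := by
  obtain ⟨F, hFJ, hbasis⟩ := exists_basis H hninc T J
  have hex : ∃ g ∈ F, ((fun j => H j ∩ T ∩ H g) '' J).Infinite := by
    by_contra hcon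
    push_neg at hcon
    have hfin := finite_image_biUnion H T J F hcon
    have heq : ∀ j ∈ J, H j ∩ T = ⋃ g ∈ F, (H j ∩ T ∩ H g) := by
      intro j hj
      apply subset_antisymm
      · intro x hx
        have hxu := hbasis j hj hx
        simp only [Set.mem_iUnion] at hxu ⊢
        obtain ⟨g, hg, hxg⟩ := hxu
        exact ⟨g, hg, hx, hxg.1⟩
      · intro x hx
        simp only [Set.mem_iUnion] at hx
        obtain ⟨g, hg, hxg⟩ := hx
        exact hxg.1
    have hfin2 : ((fun j => H j ∩ T) '' J).Finite := by
      rw [Set.image_congr heq]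
      exact hfin
    exact hJinf (Set.Finite.of_finite_image hfin2 hinj)
  obtain ⟨g, hgF, hginf⟩ := hex
  have hgJ : g ∈ J := hFJ hgF
  have hτassoc : ∀ j, H j ∩ (T ∩ H g) = H j ∩ T ∩ H g := fun j => by
    rw [Set.inter_assoc]
  have hTg : T ∩ H g ⊂ T := by
    rw [Set.inter_comm]
    exact hproper g hgJ
  set τ : ℕ → Set α := fun j => H j ∩ T ∩ H g with hτdef
  set R' : Set (Set α) := (τ '' J) \ {T ∩ H g} with hR'def
  have hR'inf : R'.Infinite := hginf.diff (Set.finite_singleton _)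
  set J' : Set ℕ := {j | j ∈ J ∧ τ j ≠ T ∩ H g ∧ ∀ k ∈ J, τ k = τ j → j ≤ k} with hJ'def
  have hinj' : Set.InjOn (fun j => H j ∩ (T ∩ H g)) J' := by
    intro a ha b hb hab
    simp only [hτassoc] at hab
    exact le_antisymm (ha.2.2 b hb.1 hab.symm) (hb.2.2 a ha.1 hab)
  have hsurj : R' ⊆ τ '' J' := by
    rintro S hS
    obtain ⟨⟨j0, hj0, rfl⟩, hSne⟩ := hS
    rw [Set.mem_singleton_iff] at hSne
    have hne : {k | k ∈ J ∧ τ k = τ j0}.Nonempty := ⟨j0, hj0, rfl⟩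
    have hm := Nat.sInf_mem hne
    refine ⟨sInf {k | k ∈ J ∧ τ k = τ j0}, ⟨hm.1, by rw [hm.2]; exact hSne,
      fun k hk hkm => ?_⟩, hm.2⟩
    exact Nat.sInf_le ⟨hk, by rw [hkm, hm.2]⟩
  have hJ'inf : J'.Infinite := by
    intro hfin
    exact hR'inf ((hfin.image τ).subset hsurj)
  refine ⟨g, hgJ, J', hTg, hJ'inf, ?_, hinj'⟩
  intro j hj
  rw [hτassoc]
  rw [Set.ssubset_iff_subset_ne]
  constructor
  · rintro x ⟨⟨_, hxT⟩, hxg⟩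
    exact ⟨hxT, hxg⟩
  · exact hj.2.1

end BauslaughAux

/-- **Lemma 2 (Bauslaugh).** In any countably infinite collection of pairwise distinct
sets one finds an infinite increasing sequence or an infinite decreasing sequence
(with pairwise distinct indices). -/
theorem infinite_increasing_or_decreasing_sequence {α : Type*} (H : ℕ → Set α)
    (hdist : Function.Injective H) :
    (∃ i : ℕ → ℕ, Function.Injective i ∧ ∀ t : ℕ,
      (⋃ s ∈ Finset.range (t + 1), H (i s)) ⊂ ⋃ s ∈ Finset.range (t + 2), H (i s)) ∨
    (∃ i : ℕ → ℕ, Function.Injective i ∧ ∀ t : ℕ,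
      (⋂ s ∈ Finset.range (t + 2), H (i s)) ⊂ ⋂ s ∈ Finset.range (t + 1), H (i s)) := by
  classical
  by_cases hinc : Incr H
  · obtain ⟨i, h1, h2⟩ := hinc
    exact Or.inl ⟨i, h1, h2⟩
  right
  -- Good states
  have stepEx : ∀ p : Set α × Set ℕ,
      p.2.Infinite → (∀ j ∈ p.2, H j ∩ p.1 ⊂ p.1) →
      Set.InjOn (fun j => H j ∩ p.1) p.2 →
      ∃ q : ℕ × (Set α × Set ℕ),
        (q.2.2.Infinite ∧ (∀ j ∈ q.2.2, H j ∩ q.2.1 ⊂ q.2.1) ∧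
          Set.InjOn (fun j => H j ∩ q.2.1) q.2.2) ∧
        q.2.1 = p.1 ∩ H q.1 ∧ q.2.1 ⊂ p.1 := by
    intro p hinf hproper hinjp
    obtain ⟨g, hgJ, J', hTg, hJ'inf, hproper', hinj'⟩ :=
      step_lemma H hinc p.1 p.2 hinf hproper hinjp
    exact ⟨⟨g, (p.1 ∩ H g, J')⟩, ⟨hJ'inf, hproper', hinj'⟩, rfl, hTg⟩
  let St := {p : Set α × Set ℕ // p.2.Infinite ∧ (∀ j ∈ p.2, H j ∩ p.1 ⊂ p.1) ∧
      Set.InjOn (fun j => H j ∩ p.1) p.2}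
  have stepEx' : ∀ σ : St, ∃ q : ℕ × (Set α × Set ℕ),
      (q.2.2.Infinite ∧ (∀ j ∈ q.2.2, H j ∩ q.2.1 ⊂ q.2.1) ∧
        Set.InjOn (fun j => H j ∩ q.2.1) q.2.2) ∧
      q.2.1 = σ.1.1 ∩ H q.1 ∧ q.2.1 ⊂ σ.1.1 :=
    fun σ => stepEx σ.1 σ.2.1 σ.2.2.1 σ.2.2.2
  choose nxt hgood hTeq hTss using stepEx'
  -- base state
  have hsub0 : {j : ℕ | H j = Set.univ}.Finite := by
    apply Set.Subsingleton.finite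
    intro a ha b hb
    exact hdist (ha.trans hb.symm)
  have hJ0inf : {j : ℕ | H j ≠ Set.univ}.Infinite := by
    have heq : {j : ℕ | H j ≠ Set.univ} = Set.univ \ {j : ℕ | H j = Set.univ} := by
      ext j; simp
    rw [heq]
    exact Set.infinite_univ.diff hsub0
  let σ0 : St := ⟨(Set.univ, {j | H j ≠ Set.univ}), hJ0inf, by
      intro j hj
      rw [Set.inter_univ]
      exact Set.ssubset_univ_iff.mpr hj, by
      intro a ha b hb hab
      simp only [Set.inter_univ] at hab
      exact hdist hab⟩
  let nxtSt : St → St := fun σ => ⟨(nxt σ).2, hgood σ⟩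
  let seq : ℕ → St := fun n => Nat.rec σ0 (fun _ σ => nxtSt σ) n
  let f : ℕ → ℕ := fun n => (nxt (seq n)).1
  let T : ℕ → Set α := fun n => (seq n).1.1
  have hT_succ : ∀ n, T (n + 1) = T n ∩ H (f n) := fun n => hTeq (seq n)
  have hT_ss : ∀ n, T (n + 1) ⊂ T n := fun n => hTss (seq n)
  have hT_mono' : ∀ m k, T (m + k) ⊆ T m := by
    intro m k
    induction k with
    | zero => exact subset_rfl
    | succ k ih => exact ((hT_ss (m + k)).subset).trans ih
  have hT_mono : ∀ m n, m ≤ n → T n ⊆ T m := by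
    intro m n hmn
    obtain ⟨k, rfl⟩ := Nat.exists_eq_add_of_le hmn
    exact hT_mono' m k
  have hT_subset_f : ∀ m n, m < n → T n ⊆ H (f m) := by
    intro m n h
    refine (hT_mono (m + 1) n h).trans ?_
    rw [hT_succ m]
    exact Set.inter_subset_right
  have hfinj : Function.Injective f := by
    have key : ∀ m n, m < n → f n ≠ f m := by
      intro m n h hne
      obtain ⟨x, hx1, hx2⟩ := Set.exists_of_ssubset (hT_ss n)
      have hxH : x ∉ H (f n) := fun hxh => hx2 (by rw [hT_succ n]; exact ⟨hx1, hxh⟩)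
      exact hxH (by rw [hne]; exact hT_subset_f m n h hx1)
    intro a b hab
    rcases lt_trichotomy a b with h | h | h
    · exact absurd hab.symm (key a b h)
    · exact h
    · exact absurd hab (key b a h)
  have hTn : ∀ n, T n = ⋂ s ∈ Finset.range n, H (f s) := by
    intro n
    induction n with
    | zero => simp [T, seq, σ0]
    | succ n ih =>
      rw [hT_succ n, ih, Finset.range_add_one, Finset.set_biInter_insert, Set.inter_comm]
  refine ⟨f, hfinj, fun t => ?_⟩
  rw [← hTn, ← hTn]
  exact hT_ss (t + 1)
end

section
/- For every natural number k, if 𝓗 is a collection of pairwise distinct sets with |𝓗| > k+1, then at least one of the following holds: the (k+1)-singleton matrix can be found in 𝓗, or the 2-cosingleton matrix can be found in 𝓗, or the 2-monotone matrix can be found in 𝓗. -/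
/-- A 0-1 matrix `N` (given as a `Prop`-valued matrix, `N i j` meaning entry 1)
with rows indexed by `Fin a` and columns by `Fin b` *can be found* in a collection
of sets `𝓗` if there are `a` distinct sets of `𝓗` and `b` distinct elements of
`⋃₀ 𝓗` such that `N` is the incidence matrix of the sets over the elements. -/
def FoundIn {α : Type*} {a b : ℕ} (N : Fin a → Fin b → Prop) (𝓗 : Set (Set α)) : Prop :=
  ∃ (H : Fin a → Set α) (e : Fin b → α),
    Function.Injective H ∧ Function.Injective e ∧
    (∀ i, H i ∈ 𝓗) ∧ (∀ j, e j ∈ ⋃₀ 𝓗) ∧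
    (∀ i j, e j ∈ H i ↔ N i j)

/-- The `n`-singleton matrix `Sⁿ`: `n+1` rows, `n` columns, entry 1 iff `i = j+1`. -/
def singletonMatrix (n : ℕ) : Fin (n + 1) → Fin n → Prop :=
  fun i j => (i : ℕ) = (j : ℕ) + 1

/-- The `n`-cosingleton matrix `S̄ⁿ`: `n+1` rows, `n` columns, entry 0 iff `i = j`. -/
def cosingletonMatrix (n : ℕ) : Fin (n + 1) → Fin n → Prop :=
  fun i j => (i : ℕ) ≠ (j : ℕ)

/-- The `n`-monotone matrix `Mⁿ`: `n+1` rows, `n` columns, entry 1 iff `i ≥ j+1`. -/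
def monotoneMatrix (n : ℕ) : Fin (n + 1) → Fin n → Prop :=
  fun i j => (j : ℕ) + 1 ≤ (i : ℕ)

/-- **The case `l = 1`:** any collection of more than `k+1` pairwise distinct sets
contains the `(k+1)`-singleton matrix, the `2`-cosingleton matrix, or the
`2`-monotone matrix. -/
theorem case_l_eq_one {α : Type*} (k : ℕ) (𝓗 : Finset (Set α)) (h : 𝓗.card > k + 1) :
    FoundIn (singletonMatrix (k + 1)) (↑𝓗 : Set (Set α)) ∨
    FoundIn (cosingletonMatrix 2) (↑𝓗 : Set (Set α)) ∨
    FoundIn (monotoneMatrix 2) (↑𝓗 : Set (Set α)) := by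
  by_cases hc : FoundIn (cosingletonMatrix 2) (↑𝓗 : Set (Set α))
  · exact Or.inr (Or.inl hc)
  by_cases hmo : FoundIn (monotoneMatrix 2) (↑𝓗 : Set (Set α))
  · exact Or.inr (Or.inr hmo)
  left
  classical
  have key2 : ∀ (x y : α) (A B C : Set α), A ∈ 𝓗 → B ∈ 𝓗 → C ∈ 𝓗 →
      x ∉ A → x ∈ B → x ∈ C → y ∈ C → y ∉ B → False := by
    intro x y A B C hA hB hC hxA hxB hxC hyC hyB
    have hxy : x ≠ y := fun h => hyB (h ▸ hxB)
    have hAB : A ≠ B := fun h => hxA (h ▸ hxB)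
    have hAC : A ≠ C := fun h => hxA (h ▸ hxC)
    have hBC : B ≠ C := fun h => hyB (h ▸ hyC)
    by_cases hyA : y ∈ A
    · apply hc
      refine ⟨![A, B, C], ![x, y], ?_, ?_, ?_, ?_, ?_⟩
      · intro i j hij
        fin_cases i <;> fin_cases j <;> simp_all
      · intro i j hij
        fin_cases i <;> fin_cases j <;> simp_all
      · intro i; fin_cases i <;> simpa
      · intro j; fin_cases j
        · exact ⟨B, hB, hxB⟩
        · exact ⟨C, hC, hyC⟩
      · intro i j
        fin_cases i <;> fin_cases j <;>
          simp [cosingletonMatrix, hxA, hxB, hxC, hyA, hyB, hyC]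
    · apply hmo
      refine ⟨![A, B, C], ![x, y], ?_, ?_, ?_, ?_, ?_⟩
      · intro i j hij
        fin_cases i <;> fin_cases j <;> simp_all
      · intro i j hij
        fin_cases i <;> fin_cases j <;> simp_all
      · intro i; fin_cases i <;> simpa
      · intro j; fin_cases j
        · exact ⟨B, hB, hxB⟩
        · exact ⟨C, hC, hyC⟩
      · intro i j
        fin_cases i <;> fin_cases j <;>
          simp [monotoneMatrix, hxA, hxB, hxC, hyA, hyB, hyC]
  have key : ∀ (x : α) (A B C : Set α), A ∈ 𝓗 → B ∈ 𝓗 → C ∈ 𝓗 →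
      x ∉ A → x ∈ B → x ∈ C → B = C := by
    intro x A B C hA hB hC hxA hxB hxC
    by_contra hBC
    by_cases hsub : C ⊆ B
    · have hns : ¬ B ⊆ C := fun h2 => hBC (subset_antisymm h2 hsub)
      obtain ⟨y, hyB, hyC⟩ := Set.not_subset.mp hns
      exact key2 x y A C B hA hC hB hxA hxC hxB hyB hyC
    · obtain ⟨y, hyC, hyB⟩ := Set.not_subset.mp hsub
      exact key2 x y A B C hA hB hC hxA hxB hxC hyC hyB
  -- get a minimal element
  have hne : 𝓗.Nonempty := Finset.card_pos.mp (by omega)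
  obtain ⟨G₀, hG₀, hmin⟩ := 𝓗.exists_minimal hne
  have hcard : k + 1 ≤ (𝓗.erase G₀).card := by
    rw [Finset.card_erase_of_mem hG₀]; omega
  obtain ⟨s, hs_sub, hs_card⟩ := Finset.exists_subset_card_eq hcard
  set q : s ≃ Fin (k+1) := s.equivFinOfCardEq hs_card with hq
  set f : Fin (k+1) → Set α := fun i => (q.symm i : Set α) with hf
  have hf_inj : Function.Injective f := Subtype.val_injective.comp q.symm.injective
  have hf_mem : ∀ i, f i ∈ 𝓗.erase G₀ := fun i => hs_sub (q.symm i).2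
  have hf_memH : ∀ i, f i ∈ 𝓗 := fun i => Finset.mem_of_mem_erase (hf_mem i)
  have hf_ne : ∀ i, f i ≠ G₀ := fun i => Finset.ne_of_mem_erase (hf_mem i)
  have hdiff : ∀ i : Fin (k+1), ∃ x, x ∈ f i ∧ x ∉ G₀ := by
    intro i
    by_contra hcon
    push_neg at hcon
    have hsub : f i ⊆ G₀ := fun x hx => hcon x hx
    exact hf_ne i (le_antisymm hsub (hmin (hf_memH i) hsub))
  choose e he1 he2 using hdiff
  refine ⟨fun i => Fin.cases G₀ f i, e, ?_, ?_, ?_, ?_, ?_⟩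
  · intro i j hij
    induction i using Fin.cases with
    | zero =>
      induction j using Fin.cases with
      | zero => rfl
      | succ j' => simp only [Fin.cases_zero, Fin.cases_succ] at hij
                   exact absurd hij.symm (hf_ne j')
    | succ i' =>
      induction j using Fin.cases with
      | zero => simp only [Fin.cases_zero, Fin.cases_succ] at hij
                exact absurd hij (hf_ne i')
      | succ j' => simp only [Fin.cases_succ] at hij
                   exact congrArg Fin.succ (hf_inj hij)
  · intro i j hij
    by_contra hne'
    have hfij : f i ≠ f j := fun h2 => hne' (hf_inj h2)
    exact hfij (key (e i) G₀ (f i) (f j) hG₀ (hf_memH i) (hf_memH j)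
      (he2 i) (he1 i) (hij ▸ he1 j))
  · intro i
    induction i using Fin.cases with
    | zero => simpa using hG₀
    | succ i' => simpa using hf_memH i'
  · intro j
    exact ⟨f j, by simpa using hf_memH j, he1 j⟩
  · intro i j
    induction i using Fin.cases with
    | zero =>
      simp only [Fin.cases_zero, singletonMatrix, Fin.val_zero]
      constructor
      · intro hx; exact absurd hx (he2 j)
      · intro hx; omega
    | succ i' =>
      simp only [Fin.cases_succ, singletonMatrix, Fin.val_succ]
      constructor
      · intro hx
        have : f i' = f j := key (e j) G₀ (f i') (f j) hG₀ (hf_memH i') (hf_memH j)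
          (he2 j) hx (he1 j)
        rw [hf_inj this]
      · intro hx
        have : i' = j := Fin.ext (by omega)
        rw [this]; exact he1 j
end

section
/- For all natural numbers k and l, let 𝓗 be the collection of all l-element subsets of [k+l] = {1, 2, …, k+l} (so |𝓗| = (k+l choose l)). Then none of the following matrices can be found in 𝓗: the (k+1)-singleton matrix, the (l+1)-cosingleton matrix, and the min(k+1, l+1)-monotone matrix. -/
lemma aux_ncard_range {n : ℕ} (e : Fin n → ℕ) (he : Function.Injective e) :
    (Set.range e).ncard = n := by
  rw [← Nat.card_coe_set_eq, Nat.card_range_of_injective he, Nat.card_eq_fintype_card,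
    Fintype.card_fin]

-- A set of l+m distinct elements inside an l-set's "frame" fails: if a member H of 𝓗
-- contains n distinct elements, then n ≤ l.
lemma aux_all_in {k l n : ℕ} (H : Set ℕ) (hH : H ⊆ Set.Icc 1 (k + l) ∧ H.ncard = l)
    (e : Fin n → ℕ) (he : Function.Injective e) (hmem : ∀ j, e j ∈ H) : n ≤ l := by
  have hfin : H.Finite := (Set.finite_Icc 1 (k + l)).subset hH.1
  have hsub : Set.range e ⊆ H := Set.range_subset_iff.2 hmem
  have := Set.ncard_le_ncard hsub hfin
  rwa [aux_ncard_range e he, hH.2] at this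

-- if a member H of 𝓗 misses n distinct elements of Icc 1 (k+l), then n ≤ k.
lemma aux_all_out {k l n : ℕ} (H : Set ℕ) (hH : H ⊆ Set.Icc 1 (k + l) ∧ H.ncard = l)
    (e : Fin n → ℕ) (he : Function.Injective e) (hIcc : ∀ j, e j ∈ Set.Icc 1 (k + l))
    (hmem : ∀ j, e j ∉ H) : n ≤ k := by
  have hIfin : (Set.Icc 1 (k + l)).Finite := Set.finite_Icc 1 (k + l)
  have hIcard : (Set.Icc 1 (k + l)).ncard = k + l := by
    rw [← Finset.coe_Icc, Set.ncard_coe_finset, Nat.card_Icc]; omega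
  have hsub : Set.range e ⊆ Set.Icc 1 (k + l) \ H := by
    rintro x ⟨j, rfl⟩; exact ⟨hIcc j, hmem j⟩
  have h1 := Set.ncard_le_ncard hsub hIfin.diff
  rw [aux_ncard_range e he, Set.ncard_diff hH.1 (hIfin.subset hH.1), hIcard, hH.2] at h1
  omega

/-- **Tightness of the bound:** in the collection of all `l`-element subsets of
`[k+l] = {1, …, k+l}`, none of the `(k+1)`-singleton, `(l+1)`-cosingleton and
`min (k+1) (l+1)`-monotone matrices can be found. -/
theorem binomial_collection_avoids (k l : ℕ) :
    ¬ FoundIn (singletonMatrix (k + 1))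
        {S : Set ℕ | S ⊆ Set.Icc 1 (k + l) ∧ S.ncard = l} ∧
    ¬ FoundIn (cosingletonMatrix (l + 1))
        {S : Set ℕ | S ⊆ Set.Icc 1 (k + l) ∧ S.ncard = l} ∧
    ¬ FoundIn (monotoneMatrix (min (k + 1) (l + 1)))
        {S : Set ℕ | S ⊆ Set.Icc 1 (k + l) ∧ S.ncard = l} := by
  have hIccOf : ∀ (e : ℕ), e ∈ ⋃₀ {S : Set ℕ | S ⊆ Set.Icc 1 (k + l) ∧ S.ncard = l} →
      e ∈ Set.Icc 1 (k + l) := by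
    rintro x ⟨S, hS, hx⟩; exact hS.1 hx
  refine ⟨?_, ?_, ?_⟩
  · rintro ⟨H, e, hHinj, heinj, hH𝓗, he𝓗, hinc⟩
    have h0 : ∀ j, e j ∉ H ⟨0, by omega⟩ := by
      intro j hj
      have := (hinc ⟨0, by omega⟩ j).1 hj
      simp [singletonMatrix] at this
    have := aux_all_out (k := k) (l := l) (H ⟨0, by omega⟩) (hH𝓗 _) e heinj
      (fun j => hIccOf _ (he𝓗 j)) h0
    omega
  · rintro ⟨H, e, hHinj, heinj, hH𝓗, he𝓗, hinc⟩
    have hall : ∀ j, e j ∈ H ⟨l + 1, by omega⟩ := by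
      intro j
      refine (hinc _ j).2 ?_
      simp only [cosingletonMatrix]
      omega
    have := aux_all_in (k := k) (l := l) (H ⟨l + 1, by omega⟩) (hH𝓗 _) e heinj hall
    omega
  · rintro ⟨H, e, hHinj, heinj, hH𝓗, he𝓗, hinc⟩
    rcases le_or_gt l k with hlk | hkl
    · have hmin : min (k + 1) (l + 1) = l + 1 := by omega
      have hall : ∀ j, e j ∈ H ⟨min (k + 1) (l + 1), by omega⟩ := by
        intro j
        refine (hinc _ j).2 ?_
        simp only [monotoneMatrix]
        have := j.isLt
        omega
      have := aux_all_in (k := k) (l := l) (H _) (hH𝓗 _) e heinj hall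
      omega
    · have hmin : min (k + 1) (l + 1) = k + 1 := by omega
      have h0 : ∀ j, e j ∉ H ⟨0, by omega⟩ := by
        intro j hj
        have := (hinc ⟨0, by omega⟩ j).1 hj
        simp [monotoneMatrix] at this
      have := aux_all_out (k := k) (l := l) (H ⟨0, by omega⟩) (hH𝓗 _) e heinj
        (fun j => hIccOf _ (he𝓗 j)) h0
      omega
end

section
/- For every natural number l ≥ 2, there exists a collection 𝓗 of pairwise distinct subsets of [2l] = {1, 2, …, 2l} with |𝓗| = (2l choose l) + (2l−3 choose l−1) such that none of the (l+1)-singleton matrix, the (l+1)-cosingleton matrix, and the (l+1)-monotone matrix can be found in 𝓗. -/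
/-! ### Auxiliary construction -/

/-- One "class" of sets: `a ∪ K` where `K` ranges over `k`-subsets of `{4, …, 2l}`. -/
def cls (l : ℕ) (a : Finset ℕ) (k : ℕ) : Finset (Finset ℕ) :=
  ((Finset.Icc 4 (2*l)).powersetCard k).image (fun K => a ∪ K)

/-- The construction: a union of nine classes. -/
def Fam (l : ℕ) : Finset (Finset ℕ) :=
  cls l {3} (l-1) ∪ cls l {3} l ∪ cls l {1,2,3} (l-3) ∪ cls l {1,2,3} (l-2) ∪
  cls l {1} (l-2) ∪ cls l {1} (l-1) ∪ cls l {2} (l-2) ∪ cls l {2} (l-1) ∪ cls l {1,2} (l-2)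

lemma cls_spec {l : ℕ} (hl : 2 ≤ l) {a : Finset ℕ} {k : ℕ}
    (ha : ∀ x ∈ a, 1 ≤ x ∧ x ≤ 3)
    {S : Finset ℕ} (hS : S ∈ cls l a k) :
    S ⊆ Finset.Icc 1 (2*l) ∧ S.card = a.card + k ∧ ∀ x ≤ 3, (x ∈ S ↔ x ∈ a) := by
  obtain ⟨K, hK, rfl⟩ := Finset.mem_image.1 hS
  rw [Finset.mem_powersetCard] at hK
  obtain ⟨hKsub, hKcard⟩ := hK
  have hK4 : ∀ x ∈ K, 4 ≤ x ∧ x ≤ 2*l := fun x hx => by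
    have := Finset.mem_Icc.1 (hKsub hx); omega
  have hdisj : Disjoint a K := by
    rw [Finset.disjoint_left]
    intro x hx hxK
    have h1 := ha x hx
    have h2 := hK4 x hxK
    omega
  refine ⟨?_, ?_, ?_⟩
  · intro x hx
    rw [Finset.mem_Icc]
    rcases Finset.mem_union.1 hx with h | h
    · have := ha x h; omega
    · have := hK4 x h; omega
  · rw [Finset.card_union_of_disjoint hdisj, hKcard]
  · intro x hx3
    rw [Finset.mem_union]
    constructor
    · rintro (h | h)
      · exact h
      · exact absurd (hK4 x h).1 (by omega)
    · exact Or.inl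

lemma fam_spec {l : ℕ} (hl : 2 ≤ l) {S : Finset ℕ} (hS : S ∈ Fam l) :
    S ⊆ Finset.Icc 1 (2*l) ∧ (l-1 ≤ S.card ∧ S.card ≤ l+1) ∧
    (S.card = l-1 → 3 ∉ S ∧ (1 ∈ S ↔ 2 ∉ S)) ∧
    (3 ∈ S → l ≤ S.card ∧ (1 ∈ S ↔ 2 ∈ S)) ∧
    (S.card = l+1 → 3 ∈ S) ∧
    (3 ∉ S → (1 ∈ S ∨ 2 ∈ S) ∧ S.card ≤ l) := by
  simp only [Fam, Finset.mem_union] at hS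
  rcases hS with ((((((((h|h)|h)|h)|h)|h)|h)|h)|h) <;>
  · obtain ⟨hsub, hcard, hmem⟩ := cls_spec hl (by decide) h
    have h1 := hmem 1 (by omega)
    have h2 := hmem 2 (by omega)
    have h3 := hmem 3 (by omega)
    simp only [Finset.mem_insert, Finset.mem_singleton] at h1 h2 h3
    norm_num at h1 h2 h3
    simp only [show ({3}:Finset ℕ).card = 1 from rfl, show ({1,2,3}:Finset ℕ).card = 3 from rfl,
      show ({1}:Finset ℕ).card = 1 from rfl, show ({2}:Finset ℕ).card = 1 from rfl,
      show ({1,2}:Finset ℕ).card = 2 from rfl] at hcard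
    refine ⟨hsub, ?_, ?_, ?_, ?_, ?_⟩ <;> simp only [h1, h2, h3, hcard] <;> simp <;> omega

lemma cls_card {l : ℕ} {a : Finset ℕ} {k : ℕ} (ha : ∀ x ∈ a, 1 ≤ x ∧ x ≤ 3) :
    (cls l a k).card = (2*l - 3).choose k := by
  have hinj : Set.InjOn (fun K => a ∪ K) ((Finset.Icc 4 (2*l)).powersetCard k) := by
    intro K1 h1 K2 h2 heq
    rw [Finset.mem_coe, Finset.mem_powersetCard] at h1 h2
    have key : ∀ (K K' : Finset ℕ), K ⊆ Finset.Icc 4 (2*l) → a ∪ K = a ∪ K' → K ⊆ K' := by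
      intro K K' hKsub hunion x hx
      have h4 : 4 ≤ x := (Finset.mem_Icc.1 (hKsub hx)).1
      have : x ∈ a ∪ K' := hunion ▸ Finset.mem_union_right _ hx
      rcases Finset.mem_union.1 this with h | h
      · exact absurd (ha x h).2 (by omega)
      · exact h
    exact Finset.Subset.antisymm (key K1 K2 h1.1 heq) (key K2 K1 h2.1 heq.symm)
  rw [cls, Finset.card_image_of_injOn hinj, Finset.card_powersetCard, Nat.card_Icc,
    show 2*l+1-4 = 2*l-3 by omega]

lemma cls_disj {l : ℕ} (hl : 2 ≤ l) {a b : Finset ℕ} {j k : ℕ}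
    (ha : ∀ x ∈ a, 1 ≤ x ∧ x ≤ 3) (hb : ∀ x ∈ b, 1 ≤ x ∧ x ≤ 3)
    (hcrit : a = b → a.card + j ≠ b.card + k) :
    Disjoint (cls l a j) (cls l b k) := by
  rw [Finset.disjoint_left]
  intro S hSa hSb
  obtain ⟨-, hca, hma⟩ := cls_spec hl ha hSa
  obtain ⟨-, hcb, hmb⟩ := cls_spec hl hb hSb
  have hab : a = b := by
    ext x
    constructor
    · intro hx; exact (hmb x (ha x hx).2).1 ((hma x (ha x hx).2).2 hx)
    · intro hx; exact (hma x (hb x hx).2).1 ((hmb x (hb x hx).2).2 hx)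
  apply hcrit hab
  rw [hab] at hca
  rw [hab]
  omega

lemma fam_card {l : ℕ} (hl : 2 ≤ l) :
    (Fam l).card = (2*l).choose l + (2*l - 3).choose (l-1) := by
  rcases eq_or_lt_of_le hl with h2 | h3
  · rw [← h2]; decide
  · obtain ⟨m, rfl⟩ : ∃ m, l = m + 3 := ⟨l - 3, by omega⟩
    have hl' : 2 ≤ m + 3 := by omega
    have e1 : m + 3 - 1 = m + 2 := rfl
    have e2 : m + 3 - 2 = m + 1 := rfl
    have e3 : m + 3 - 3 = m := rfl
    have e4 : 2*(m+3) - 3 = 2*m + 3 := by omega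
    -- abbreviations for validity conditions
    have v3 : ∀ x ∈ ({3}:Finset ℕ), 1 ≤ x ∧ x ≤ 3 := by decide
    have v123 : ∀ x ∈ ({1,2,3}:Finset ℕ), 1 ≤ x ∧ x ≤ 3 := by decide
    have v1 : ∀ x ∈ ({1}:Finset ℕ), 1 ≤ x ∧ x ≤ 3 := by decide
    have v2 : ∀ x ∈ ({2}:Finset ℕ), 1 ≤ x ∧ x ≤ 3 := by decide
    have v12 : ∀ x ∈ ({1,2}:Finset ℕ), 1 ≤ x ∧ x ≤ 3 := by decide
    have hcards : ({3}:Finset ℕ).card = 1 ∧ ({1,2,3}:Finset ℕ).card = 3 ∧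
        ({1}:Finset ℕ).card = 1 ∧ ({2}:Finset ℕ).card = 1 ∧ ({1,2}:Finset ℕ).card = 2 := by
      decide
    obtain ⟨w3, w123, w1, w2, w12⟩ := hcards
    simp only [Fam, e1, e2, e3]
    rw [Finset.card_union_of_disjoint (by
      simp only [Finset.disjoint_union_left]
      refine ⟨⟨⟨⟨⟨⟨⟨?_,?_⟩,?_⟩,?_⟩,?_⟩,?_⟩,?_⟩,?_⟩ <;>
        apply cls_disj hl' <;> first
          | decide
          | (intro hab; first
              | exact absurd hab (by decide)
              | (rw [← hab]; omega)))]
    rw [Finset.card_union_of_disjoint (by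
      simp only [Finset.disjoint_union_left]
      refine ⟨⟨⟨⟨⟨⟨?_,?_⟩,?_⟩,?_⟩,?_⟩,?_⟩,?_⟩ <;>
        apply cls_disj hl' <;> first
          | decide
          | (intro hab; first
              | exact absurd hab (by decide)
              | (rw [← hab]; omega)))]
    rw [Finset.card_union_of_disjoint (by
      simp only [Finset.disjoint_union_left]
      refine ⟨⟨⟨⟨⟨?_,?_⟩,?_⟩,?_⟩,?_⟩,?_⟩ <;>
        apply cls_disj hl' <;> first
          | decide
          | (intro hab; first
              | exact absurd hab (by decide)
              | (rw [← hab]; omega)))]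
    rw [Finset.card_union_of_disjoint (by
      simp only [Finset.disjoint_union_left]
      refine ⟨⟨⟨⟨?_,?_⟩,?_⟩,?_⟩,?_⟩ <;>
        apply cls_disj hl' <;> first
          | decide
          | (intro hab; first
              | exact absurd hab (by decide)
              | (rw [← hab]; omega)))]
    rw [Finset.card_union_of_disjoint (by
      simp only [Finset.disjoint_union_left]
      refine ⟨⟨⟨?_,?_⟩,?_⟩,?_⟩ <;>
        apply cls_disj hl' <;> first
          | decide
          | (intro hab; first
              | exact absurd hab (by decide)
              | (rw [← hab]; omega)))]
    rw [Finset.card_union_of_disjoint (by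
      simp only [Finset.disjoint_union_left]
      refine ⟨⟨?_,?_⟩,?_⟩ <;>
        apply cls_disj hl' <;> first
          | decide
          | (intro hab; first
              | exact absurd hab (by decide)
              | (rw [← hab]; omega)))]
    rw [Finset.card_union_of_disjoint (by
      simp only [Finset.disjoint_union_left]
      refine ⟨?_,?_⟩ <;>
        apply cls_disj hl' <;> first
          | decide
          | (intro hab; first
              | exact absurd hab (by decide)
              | (rw [← hab]; omega)))]
    rw [Finset.card_union_of_disjoint (by
      apply cls_disj hl' v3 v3
      intro _; omega)]
    simp only [cls_card v3, cls_card v123, cls_card v1, cls_card v2, cls_card v12, e4, e1]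
    have hpascal : ∀ (n k : ℕ), (n+3).choose (k+3) =
        n.choose k + 3*(n.choose (k+1)) + 3*(n.choose (k+2)) + n.choose (k+3) := by
      intro n k
      have a : ∀ N K : ℕ, (N+1).choose (K+1) = N.choose K + N.choose (K+1) :=
        Nat.choose_succ_succ
      have h1 : (n+3).choose (k+3) = (n+2).choose (k+2) + (n+2).choose (k+3) := a (n+2) (k+2)
      have h2 : (n+2).choose (k+2) = (n+1).choose (k+1) + (n+1).choose (k+2) := a (n+1) (k+1)
      have h3 : (n+2).choose (k+3) = (n+1).choose (k+2) + (n+1).choose (k+3) := a (n+1) (k+2)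
      have h4 : (n+1).choose (k+1) = n.choose k + n.choose (k+1) := a n k
      have h5 : (n+1).choose (k+2) = n.choose (k+1) + n.choose (k+2) := a n (k+1)
      have h6 : (n+1).choose (k+3) = n.choose (k+2) + n.choose (k+3) := a n (k+2)
      rw [h1,h2,h3,h4,h5,h6]; ring
    have hbig : (2*(m+3)).choose (m+3) = (2*m+3).choose m + 3*((2*m+3).choose (m+1)) +
        3*((2*m+3).choose (m+2)) + (2*m+3).choose (m+3) := by
      rw [show 2*(m+3) = (2*m+3)+3 by ring]
      exact hpascal (2*m+3) m
    have hsym : (2*m+3).choose (m+1) = (2*m+3).choose (m+2) := by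
      conv_lhs => rw [← Nat.choose_symm (by omega : m+1 ≤ 2*m+3)]
      congr 1
      omega
    rw [hbig]
    omega

/-- Unpack a `FoundIn` statement for our family into finset data. -/
lemma setup {l : ℕ} (hl : 2 ≤ l) {a b : ℕ} {N : Fin a → Fin b → Prop}
    (h : FoundIn N (↑((Fam l).map ⟨fun t : Finset ℕ => (t : Set ℕ), Finset.coe_injective⟩) : Set (Set ℕ))) :
    ∃ (s : Fin a → Finset ℕ) (e : Fin b → ℕ),
      Function.Injective e ∧ (∀ i, s i ∈ Fam l) ∧ (∀ j, e j ∈ Finset.Icc 1 (2*l)) ∧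
      (∀ i j, e j ∈ s i ↔ N i j) := by
  obtain ⟨H, e, _, heinj, hHmem, hemem, hiff⟩ := h
  have hs : ∀ i, ∃ t, t ∈ Fam l ∧ (t : Set ℕ) = H i := by
    intro i
    obtain ⟨t, ht, heq⟩ := Finset.mem_map.1 (Finset.mem_coe.1 (hHmem i))
    exact ⟨t, ht, heq⟩
  choose s hsF hsH using hs
  refine ⟨s, e, heinj, hsF, ?_, ?_⟩
  · intro j
    obtain ⟨X, hX, hxX⟩ := hemem j
    obtain ⟨t, htF, rfl⟩ := Finset.mem_map.1 (Finset.mem_coe.1 hX)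
    exact (fam_spec hl htF).1 (Finset.mem_coe.1 hxX)
  · intro i j
    rw [← hiff i j, ← hsH i]
    exact Iff.rfl

/-- **Proposition (lower bound for `S(l,l)`):** for every `l ≥ 2` there is a
collection of `(2l).choose l + (2l-3).choose (l-1)` pairwise distinct subsets of
`[2l]` in which none of the `(l+1)`-singleton, `(l+1)`-cosingleton and
`(l+1)`-monotone matrices can be found. -/
theorem lower_bound_S_ll (l : ℕ) (hl : 2 ≤ l) :
    ∃ 𝓗 : Finset (Set ℕ),
      (∀ S ∈ 𝓗, S ⊆ Set.Icc 1 (2 * l)) ∧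
      𝓗.card = (2 * l).choose l + (2 * l - 3).choose (l - 1) ∧
      ¬ FoundIn (singletonMatrix (l + 1)) (↑𝓗 : Set (Set ℕ)) ∧
      ¬ FoundIn (cosingletonMatrix (l + 1)) (↑𝓗 : Set (Set ℕ)) ∧
      ¬ FoundIn (monotoneMatrix (l + 1)) (↑𝓗 : Set (Set ℕ)) := by
  refine ⟨(Fam l).map ⟨fun t : Finset ℕ => (t : Set ℕ), Finset.coe_injective⟩, ?_, ?_, ?_, ?_, ?_⟩
  · -- subsets of [1, 2l]
    intro S hS
    obtain ⟨t, htF, rfl⟩ := Finset.mem_map.1 hS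
    intro x hx
    have := (fam_spec hl htF).1 (Finset.mem_coe.1 hx)
    rw [Set.mem_Icc]
    exact Finset.mem_Icc.1 this
  · -- cardinality
    rw [Finset.card_map]
    exact fam_card hl
  · -- no singleton matrix
    intro h
    obtain ⟨s, e, heinj, hsF, heG, hiff⟩ := setup hl h
    set G := Finset.Icc 1 (2*l) with hGdef
    set E := Finset.image e Finset.univ with hEdef
    have hEcard : E.card = l + 1 := by
      rw [hEdef, Finset.card_image_of_injective _ heinj, Finset.card_univ, Fintype.card_fin]
    have hEG : E ⊆ G := by
      intro x hx
      obtain ⟨j, -, rfl⟩ := Finset.mem_image.1 hx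
      exact heG j
    have hGcard : G.card = 2*l := by rw [hGdef, Nat.card_Icc]; omega
    -- row 0 : disjoint from E
    set i0 : Fin (l+1+1) := ⟨0, by omega⟩ with hi0
    have h0 : ∀ j, e j ∉ s i0 := by
      intro j hj
      have h2 := (hiff i0 j).1 hj
      have : (i0 : ℕ) = 0 := rfl
      rw [singletonMatrix] at h2
      omega
    have hsub0 : s i0 ⊆ G \ E := by
      intro x hx
      rw [Finset.mem_sdiff]
      refine ⟨(fam_spec hl (hsF i0)).1 hx, fun hxE => ?_⟩
      obtain ⟨j, -, rfl⟩ := Finset.mem_image.1 hxE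
      exact h0 j hx
    have hGEcard : (G \ E).card = l - 1 := by
      rw [Finset.card_sdiff_of_subset hEG, hGcard, hEcard]; omega
    have heq0 : s i0 = G \ E := by
      apply Finset.eq_of_subset_of_card_le hsub0
      rw [hGEcard]
      exact (fam_spec hl (hsF i0)).2.1.1
    have hcard0 : (s i0).card = l - 1 := by rw [heq0, hGEcard]
    obtain ⟨h3n0, hxor0⟩ := (fam_spec hl (hsF i0)).2.2.1 hcard0
    -- 3 ∈ E
    have h3G : (3:ℕ) ∈ G := by rw [hGdef, Finset.mem_Icc]; omega
    have h3E : (3:ℕ) ∈ E := by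
      by_contra h3E
      exact h3n0 (heq0 ▸ Finset.mem_sdiff.2 ⟨h3G, h3E⟩)
    obtain ⟨j0, -, hj0⟩ := Finset.mem_image.1 h3E
    -- row j0+1
    set i1 : Fin (l+1+1) := ⟨(j0:ℕ)+1, by have := j0.isLt; omega⟩ with hi1
    have hmem1 : ∀ j, e j ∈ s i1 ↔ j = j0 := by
      intro j
      rw [hiff i1 j]
      rw [singletonMatrix]
      have : (i1 : ℕ) = (j0:ℕ)+1 := rfl
      rw [this]
      constructor
      · intro hh; exact Fin.ext (by omega)
      · intro hh; rw [hh]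
    have h31 : (3:ℕ) ∈ s i1 := by rw [← hj0]; exact (hmem1 j0).2 rfl
    have hsub1 : s i1 ⊆ insert 3 (s i0) := by
      intro x hx
      rw [Finset.mem_insert]
      by_cases hxE : x ∈ E
      · obtain ⟨j, -, rfl⟩ := Finset.mem_image.1 hxE
        left
        rw [(hmem1 j).1 hx]
        exact hj0
      · right
        rw [heq0, Finset.mem_sdiff]
        exact ⟨(fam_spec hl (hsF i1)).1 hx, hxE⟩
    have hinscard : (insert 3 (s i0)).card = l := by
      rw [Finset.card_insert_of_notMem h3n0, hcard0]; omega
    have heq1 : s i1 = insert 3 (s i0) := by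
      apply Finset.eq_of_subset_of_card_le hsub1
      rw [hinscard]
      exact ((fam_spec hl (hsF i1)).2.2.2.1 h31).1
    obtain ⟨-, hiff1⟩ := (fam_spec hl (hsF i1)).2.2.2.1 h31
    have h1m : (1:ℕ) ∈ s i1 ↔ (1:ℕ) ∈ s i0 := by
      rw [heq1, Finset.mem_insert]
      constructor
      · rintro (h|h)
        · omega
        · exact h
      · exact Or.inr
    have h2m : (2:ℕ) ∈ s i1 ↔ (2:ℕ) ∈ s i0 := by
      rw [heq1, Finset.mem_insert]
      constructor
      · rintro (h|h)
        · omega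
        · exact h
      · exact Or.inr
    rw [h1m, h2m] at hiff1
    tauto
  · -- no cosingleton matrix
    intro h
    obtain ⟨s, e, heinj, hsF, heG, hiff⟩ := setup hl h
    set E := Finset.image e Finset.univ with hEdef
    have hEcard : E.card = l + 1 := by
      rw [hEdef, Finset.card_image_of_injective _ heinj, Finset.card_univ, Fintype.card_fin]
    -- row l+1 contains E
    set iL : Fin (l+1+1) := ⟨l+1, by omega⟩ with hiL
    have hEsub : E ⊆ s iL := by
      intro x hx
      obtain ⟨j, -, rfl⟩ := Finset.mem_image.1 hx
      apply (hiff iL j).2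
      rw [cosingletonMatrix]
      have h1 : (iL : ℕ) = l+1 := rfl
      have h2 := j.isLt
      omega
    have heqL : E = s iL := by
      apply Finset.eq_of_subset_of_card_le hEsub
      rw [hEcard]
      exact (fam_spec hl (hsF iL)).2.1.2
    have hEF : E ∈ Fam l := heqL ▸ hsF iL
    have h3E : (3:ℕ) ∈ E := (fam_spec hl hEF).2.2.2.2.1 hEcard
    have hiffE : (1:ℕ) ∈ E ↔ (2:ℕ) ∈ E := ((fam_spec hl hEF).2.2.2.1 h3E).2
    obtain ⟨j3, -, hj3⟩ := Finset.mem_image.1 h3E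
    by_cases h1E : (1:ℕ) ∈ E
    · -- case 1,2,3 ∈ E : use the column of 1
      have h2E : (2:ℕ) ∈ E := hiffE.1 h1E
      obtain ⟨j1, -, hj1⟩ := Finset.mem_image.1 h1E
      obtain ⟨j2, -, hj2⟩ := Finset.mem_image.1 h2E
      set i : Fin (l+1+1) := ⟨(j1:ℕ), by have := j1.isLt; omega⟩ with hidef
      have hmemi : ∀ j, e j ∈ s i ↔ (j1:ℕ) ≠ (j:ℕ) := fun j => (hiff i j).trans Iff.rfl
      have h1n : (1:ℕ) ∉ s i := by
        rw [← hj1, hmemi j1]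
        simp
      have h2i : (2:ℕ) ∈ s i := by
        rw [← hj2, hmemi j2]
        intro hval
        have : j1 = j2 := Fin.ext hval
        rw [this, hj2] at hj1
        omega
      have h3i : (3:ℕ) ∈ s i := by
        rw [← hj3, hmemi j3]
        intro hval
        have : j1 = j3 := Fin.ext hval
        rw [this, hj3] at hj1
        omega
      exact h1n ((((fam_spec hl (hsF i)).2.2.2.1 h3i).2).2 h2i)
    · -- case 1,2 ∉ E : use the column of 3
      have h2E : (2:ℕ) ∉ E := fun h => h1E (hiffE.2 h)
      set i : Fin (l+1+1) := ⟨(j3:ℕ), by have := j3.isLt; omega⟩ with hidef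
      have hmemi : ∀ j, e j ∈ s i ↔ (j3:ℕ) ≠ (j:ℕ) := fun j => (hiff i j).trans Iff.rfl
      have h3n : (3:ℕ) ∉ s i := by
        rw [← hj3, hmemi j3]
        simp
      obtain ⟨hor, hcle⟩ := (fam_spec hl (hsF i)).2.2.2.2.2 h3n
      have hsubi : E.erase 3 ⊆ s i := by
        intro x hx
        rw [Finset.mem_erase] at hx
        obtain ⟨hx3, hxE⟩ := hx
        obtain ⟨j, -, rfl⟩ := Finset.mem_image.1 hxE
        rw [hmemi j]
        intro hval
        have : j3 = j := Fin.ext hval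
        rw [← this, hj3] at hx3
        exact hx3 rfl
      have hecard : (E.erase 3).card = l := by
        rw [Finset.card_erase_of_mem h3E, hEcard]
        omega
      have heqi : E.erase 3 = s i := by
        apply Finset.eq_of_subset_of_card_le hsubi
        rw [hecard]
        exact hcle
      rcases hor with h | h
      · have : (1:ℕ) ∈ E.erase 3 := heqi ▸ h
        exact h1E (Finset.mem_of_mem_erase this)
      · have : (2:ℕ) ∈ E.erase 3 := heqi ▸ h
        exact h2E (Finset.mem_of_mem_erase this)
  · -- no monotone matrix
    intro h
    obtain ⟨s, e, heinj, hsF, heG, hiff⟩ := setup hl h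
    set G := Finset.Icc 1 (2*l) with hGdef
    set E := Finset.image e Finset.univ with hEdef
    have hEcard : E.card = l + 1 := by
      rw [hEdef, Finset.card_image_of_injective _ heinj, Finset.card_univ, Fintype.card_fin]
    have hEG : E ⊆ G := by
      intro x hx
      obtain ⟨j, -, rfl⟩ := Finset.mem_image.1 hx
      exact heG j
    have hGcard : G.card = 2*l := by rw [hGdef, Nat.card_Icc]; omega
    -- row l+1 contains E
    set iL : Fin (l+1+1) := ⟨l+1, by omega⟩ with hiL
    have hEsub : E ⊆ s iL := by
      intro x hx
      obtain ⟨j, -, rfl⟩ := Finset.mem_image.1 hx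
      apply (hiff iL j).2
      rw [monotoneMatrix]
      have h1 : (iL : ℕ) = l+1 := rfl
      have h2 := j.isLt
      omega
    have heqL : E = s iL := by
      apply Finset.eq_of_subset_of_card_le hEsub
      rw [hEcard]
      exact (fam_spec hl (hsF iL)).2.1.2
    have hEF : E ∈ Fam l := heqL ▸ hsF iL
    have h3E : (3:ℕ) ∈ E := (fam_spec hl hEF).2.2.2.2.1 hEcard
    have hiffE : (1:ℕ) ∈ E ↔ (2:ℕ) ∈ E := ((fam_spec hl hEF).2.2.2.1 h3E).2
    -- row 0 : disjoint from E
    set i0 : Fin (l+1+1) := ⟨0, by omega⟩ with hi0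
    have h0 : ∀ j, e j ∉ s i0 := by
      intro j hj
      have h2 := (hiff i0 j).1 hj
      rw [monotoneMatrix] at h2
      have : (i0 : ℕ) = 0 := rfl
      omega
    have hsub0 : s i0 ⊆ G \ E := by
      intro x hx
      rw [Finset.mem_sdiff]
      refine ⟨(fam_spec hl (hsF i0)).1 hx, fun hxE => ?_⟩
      obtain ⟨j, -, rfl⟩ := Finset.mem_image.1 hxE
      exact h0 j hx
    have hGEcard : (G \ E).card = l - 1 := by
      rw [Finset.card_sdiff_of_subset hEG, hGcard, hEcard]; omega
    have heq0 : s i0 = G \ E := by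
      apply Finset.eq_of_subset_of_card_le hsub0
      rw [hGEcard]
      exact (fam_spec hl (hsF i0)).2.1.1
    have hcard0 : (s i0).card = l - 1 := by rw [heq0, hGEcard]
    obtain ⟨-, hxor0⟩ := (fam_spec hl (hsF i0)).2.2.1 hcard0
    have h1G : (1:ℕ) ∈ G := by rw [hGdef, Finset.mem_Icc]; omega
    have h2G : (2:ℕ) ∈ G := by rw [hGdef, Finset.mem_Icc]; omega
    have h1m : (1:ℕ) ∈ s i0 ↔ (1:ℕ) ∉ E := by
      rw [heq0, Finset.mem_sdiff]
      constructor
      · exact fun h => h.2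
      · exact fun h => ⟨h1G, h⟩
    have h2m : (2:ℕ) ∈ s i0 ↔ (2:ℕ) ∉ E := by
      rw [heq0, Finset.mem_sdiff]
      constructor
      · exact fun h => h.2
      · exact fun h => ⟨h2G, h⟩
    rw [h1m, h2m] at hxor0
    by_cases h1 : (1:ℕ) ∈ E
    · exact (hxor0.2 (fun h2 => h2 (hiffE.1 h1))) h1
    · have h2 : (2:ℕ) ∈ E := not_not.mp (hxor0.1 h1)
      exact h1 (hiffE.2 h2)
end

section
/- Let k and l be natural numbers and let 𝓗 = {H₁, H₂, …, H_m} be a collection of m pairwise distinct subsets of [k+l] = {1, 2, …, k+l}. If m > (k+l choose l), then at least one of the following holds: (1) the (k+1)-singleton matrix can be found in the subcollection of those sets of 𝓗 that have at most l elements; (2) the (l+1)-cosingleton matrix can be found in the subcollection of those sets of 𝓗 that have at least l+1 elements; (3) there exist indices i ≠ j such that H_j ⊆ H_i, |H_j| ≤ l, and |H_i| ≥ l+1. -/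
open Finset

namespace SubsetsOfIntervalAux

/-- The level-`l` superset neighborhood of a family `W` inside universe `V`. -/
def NN (V : Finset ℕ) (l : ℕ) (W : Finset (Finset ℕ)) : Finset (Finset ℕ) :=
  (V.powersetCard l).filter fun L => ∃ A ∈ W, A ⊆ L

/-- Sunflower structure: some member inside `Z`, and for each `e ∈ V \ Z` a member
`C` with `e ∈ C ⊆ insert e Z`. -/
def SF (V Z : Finset ℕ) (W : Finset (Finset ℕ)) : Prop :=
  (∃ R ∈ W, R ⊆ Z) ∧ ∀ e ∈ V, e ∉ Z → ∃ C ∈ W, e ∈ C ∧ C ⊆ insert e Z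

lemma SF_mono {V Z : Finset ℕ} {W W' : Finset (Finset ℕ)} (h : W ⊆ W') (hsf : SF V Z W) :
    SF V Z W' := by
  obtain ⟨⟨R, hR, hRZ⟩, hwit⟩ := hsf
  exact ⟨⟨R, h hR, hRZ⟩, fun e he heZ => by
    obtain ⟨C, hC, h1, h2⟩ := hwit e he heZ; exact ⟨C, h hC, h1, h2⟩⟩

lemma mem_NN {V : Finset ℕ} {l : ℕ} {W : Finset (Finset ℕ)} {L : Finset ℕ} :
    L ∈ NN V l W ↔ (L ⊆ V ∧ L.card = l) ∧ ∃ A ∈ W, A ⊆ L := by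
  simp [NN, Finset.mem_powersetCard]

/-- Key combinatorial core: a Hall violator contains a sunflower rooted near any
inclusion-minimal member of size `< l`. -/
lemma core (V : Finset ℕ) (l : ℕ) (hVl : l ≤ V.card + 1) :
    ∀ (μ : ℕ) (W : Finset (Finset ℕ)) (R : Finset ℕ),
      W.card * (l + 1) + (l - R.card) ≤ μ →
      (∀ A ∈ W, A ⊆ V) → (∀ A ∈ W, A.card ≤ l) →
      (NN V l W).card < W.card →
      R ∈ W → (∀ B ∈ W, B ⊆ R → B = R) → R.card < l →
      ∃ Z, Z ⊆ V ∧ Z.card = l - 1 ∧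
        ((R ⊆ Z ∧ SF V Z W) ∨ SF V Z (W.erase R)) := by
  intro μ
  induction μ with
  | zero =>
    intro W R hμ _ _ _ hR _ _
    have h1 : 1 ≤ W.card := Finset.card_pos.mpr ⟨R, hR⟩
    have h2 : 1 * (l + 1) ≤ W.card * (l + 1) := Nat.mul_le_mul_right _ h1
    omega
  | succ μ ih =>
    intro W R hμ hWV hWl hviol hR hRmin hRl
    by_cases hA : ∀ z ∈ V, z ∉ R → ∃ C ∈ W, z ∈ C ∧ C ⊆ insert z R
    · -- Case A : pad R to an (l-1)-set
      obtain ⟨Z, hRZ, hZV, hZcard⟩ :=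
        Finset.exists_subsuperset_card_eq (n := l - 1) (hWV R hR) (by omega) (by omega)
      refine ⟨Z, hZV, hZcard, Or.inl ⟨hRZ, ⟨R, hR, hRZ⟩, fun e he heZ => ?_⟩⟩
      have heR : e ∉ R := fun h => heZ (hRZ h)
      obtain ⟨C, hCW, heC, hCsub⟩ := hA e he heR
      exact ⟨C, hCW, heC, hCsub.trans (Finset.insert_subset_insert _ hRZ)⟩
    · push_neg at hA
      obtain ⟨z, hzV, hzR, hz⟩ := hA
      by_cases hd : R.card + 1 < l
      · -- Case B1 : replace R by insert z R and recurse
        set R' := insert z R with hR'def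
        have hR'nW : R' ∉ W := fun h => hz R' h (Finset.mem_insert_self _ _) Finset.Subset.rfl
        have hR'card : R'.card = R.card + 1 := Finset.card_insert_of_notMem hzR
        set W' := insert R' (W.erase R) with hW'def
        have hR'nE : R' ∉ W.erase R := fun h => hR'nW (Finset.mem_of_mem_erase h)
        have hW'card : W'.card = W.card := by
          rw [hW'def, Finset.card_insert_of_notMem hR'nE, Finset.card_erase_of_mem hR]
          have : 1 ≤ W.card := Finset.card_pos.mpr ⟨R, hR⟩
          omega
        have hW'V : ∀ A ∈ W', A ⊆ V := by
          intro A hA'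
          rcases Finset.mem_insert.mp hA' with h | h
          · subst h; exact Finset.insert_subset hzV (hWV R hR)
          · exact hWV _ (Finset.mem_of_mem_erase h)
        have hW'l : ∀ A ∈ W', A.card ≤ l := by
          intro A hA'
          rcases Finset.mem_insert.mp hA' with h | h
          · subst h; omega
          · exact hWl _ (Finset.mem_of_mem_erase h)
        have hNN' : NN V l W' ⊆ NN V l W := by
          intro L hL
          obtain ⟨hL1, A, hAW', hAL⟩ := mem_NN.mp hL
          refine mem_NN.mpr ⟨hL1, ?_⟩
          rcases Finset.mem_insert.mp hAW' with h | h
          · exact ⟨R, hR, (Finset.subset_insert _ _).trans (h ▸ hAL)⟩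
          · exact ⟨A, Finset.mem_of_mem_erase h, hAL⟩
        have hviol' : (NN V l W').card < W'.card := by
          rw [hW'card]; exact lt_of_le_of_lt (Finset.card_le_card hNN') hviol
        have hR'min : ∀ B ∈ W', B ⊆ R' → B = R' := by
          intro B hBW' hBR'
          rcases Finset.mem_insert.mp hBW' with h | h
          · exact h
          · exfalso
            have hBW := Finset.mem_of_mem_erase h
            have hBne := Finset.ne_of_mem_erase h
            by_cases hzB : z ∈ B
            · exact hz B hBW hzB hBR'
            · have : B ⊆ R := fun x hx => by
                rcases Finset.mem_insert.mp (hBR' hx) with h' | h'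
                · exact absurd (h' ▸ hx) hzB
                · exact h'
              exact hBne (hRmin B hBW this)
        obtain ⟨Z, hZV, hZc, hdisj⟩ := ih W' R'
          (by
            have h1 : W'.card * (l+1) = W.card * (l+1) := by rw [hW'card]
            omega)
          hW'V hW'l hviol' (Finset.mem_insert_self _ _) hR'min (by omega)
        rcases hdisj with ⟨hR'Z, ⟨_, hwit⟩⟩ | hsf
        · refine ⟨Z, hZV, hZc, Or.inl ⟨(Finset.subset_insert _ _).trans hR'Z, ⟨R, hR,
            (Finset.subset_insert _ _).trans hR'Z⟩, fun e he heZ => ?_⟩⟩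
          obtain ⟨C, hCW', heC, hCsub⟩ := hwit e he heZ
          rcases Finset.mem_insert.mp hCW' with h | h
          · exact absurd (hR'Z (h ▸ heC)) heZ
          · exact ⟨C, Finset.mem_of_mem_erase h, heC, hCsub⟩
        · refine ⟨Z, hZV, hZc, Or.inr ?_⟩
          rw [hW'def, Finset.erase_insert hR'nE] at hsf
          exact hsf
      · -- Case B2 : R.card + 1 = l ; erase R and recurse
        have hcard : R.card + 1 = l := by omega
        set W' := W.erase R with hW'def
        have hWW' : W'.card + 1 = W.card := Finset.card_erase_add_one hR
        have hviol' : (NN V l W').card < W'.card := by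
          by_contra hcon
          push_neg at hcon
          set Lz := insert z R with hLzdef
          have hLzV : Lz ⊆ V := Finset.insert_subset hzV (hWV R hR)
          have hLzcard : Lz.card = l := by
            rw [hLzdef, Finset.card_insert_of_notMem hzR]; omega
          have hLzNN : Lz ∈ NN V l W := mem_NN.mpr ⟨⟨hLzV, hLzcard⟩, R, hR, Finset.subset_insert _ _⟩
          have hLznNN' : Lz ∉ NN V l W' := by
            intro hmem
            obtain ⟨_, C, hCW', hCsub⟩ := mem_NN.mp hmem
            have hCW := Finset.mem_of_mem_erase hCW'
            have hCne := Finset.ne_of_mem_erase hCW'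
            by_cases hzC : z ∈ C
            · exact hz C hCW hzC hCsub
            · have : C ⊆ R := fun x hx => by
                rcases Finset.mem_insert.mp (hCsub hx) with h' | h'
                · exact absurd (h' ▸ hx) hzC
                · exact h'
              exact hCne (hRmin C hCW this)
          have hsub : insert Lz (NN V l W') ⊆ NN V l W := by
            intro L hL
            rcases Finset.mem_insert.mp hL with h | h
            · exact h ▸ hLzNN
            · obtain ⟨h1, C, hCW', hCsub⟩ := mem_NN.mp h
              exact mem_NN.mpr ⟨h1, C, Finset.mem_of_mem_erase hCW', hCsub⟩
          have : (NN V l W').card + 1 ≤ (NN V l W).card := by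
            rw [← Finset.card_insert_of_notMem hLznNN']
            exact Finset.card_le_card hsub
          omega
        -- W' is nonempty; take a member of minimum cardinality
        have hW'ne : W'.Nonempty := Finset.card_pos.mp (by omega)
        obtain ⟨R', hR'W', hR'min0⟩ := Finset.exists_min_image W' Finset.card hW'ne
        have hR'l : R'.card < l := by
          by_contra hcon
          push_neg at hcon
          have hsub : W' ⊆ NN V l W' := by
            intro A hAW'
            have hAW := Finset.mem_of_mem_erase hAW'
            have : A.card = l := le_antisymm (hWl A hAW) (le_trans hcon (hR'min0 A hAW'))
            exact mem_NN.mpr ⟨⟨hWV A hAW, this⟩, A, hAW', Finset.Subset.rfl⟩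
          exact absurd (Finset.card_le_card hsub) (by omega)
        have hR'min : ∀ B ∈ W', B ⊆ R' → B = R' := by
          intro B hB hBR'
          exact Finset.eq_of_subset_of_card_le hBR' (hR'min0 B hB)
        obtain ⟨Z, hZV, hZc, hdisj⟩ := ih W' R'
          (by
            have h1 : W'.card * (l+1) + (l+1) = W.card * (l+1) := by
              rw [← hWW']; ring
            have h2 : l - R'.card ≤ l := Nat.sub_le _ _
            omega)
          (fun A hA' => hWV A (Finset.mem_of_mem_erase hA'))
          (fun A hA' => hWl A (Finset.mem_of_mem_erase hA'))
          hviol' hR'W' hR'min hR'l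
        refine ⟨Z, hZV, hZc, Or.inr ?_⟩
        rcases hdisj with ⟨_, hsf⟩ | hsf
        · exact hsf
        · exact SF_mono (Finset.erase_subset _ _) hsf


lemma violator_sunflower {V : Finset ℕ} {l : ℕ} {W : Finset (Finset ℕ)}
    (hVl : l ≤ V.card)
    (hWV : ∀ A ∈ W, A ⊆ V) (hWl : ∀ A ∈ W, A.card ≤ l)
    (hviol : (NN V l W).card < W.card) :
    ∃ Z, Z ⊆ V ∧ Z.card = l - 1 ∧ 1 ≤ l ∧ SF V Z W := by
  have hWne : W.Nonempty := Finset.card_pos.mp (by omega)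
  obtain ⟨R, hRW, hRmin0⟩ := Finset.exists_min_image W Finset.card hWne
  have hRl : R.card < l := by
    by_contra hcon
    push_neg at hcon
    have hsub : W ⊆ NN V l W := by
      intro A hAW
      have : A.card = l := le_antisymm (hWl A hAW) (le_trans hcon (hRmin0 A hAW))
      exact mem_NN.mpr ⟨⟨hWV A hAW, this⟩, A, hAW, Finset.Subset.rfl⟩
    exact absurd (Finset.card_le_card hsub) (by omega)
  have hRmin : ∀ B ∈ W, B ⊆ R → B = R := fun B hB hBR =>
    Finset.eq_of_subset_of_card_le hBR (hRmin0 B hB)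
  obtain ⟨Z, hZV, hZc, hdisj⟩ := core V l (by omega)
    (W.card * (l + 1) + (l - R.card)) W R le_rfl hWV hWl hviol hRW hRmin hRl
  refine ⟨Z, hZV, hZc, by omega, ?_⟩
  rcases hdisj with ⟨_, hsf⟩ | hsf
  · exact hsf
  · exact SF_mono (Finset.erase_subset _ _) hsf

lemma exists_injection {V : Finset ℕ} {l : ℕ} {𝓐 : Finset (Finset ℕ)}
    (hVl : l ≤ V.card) (hAV : ∀ A ∈ 𝓐, A ⊆ V) (hAl : ∀ A ∈ 𝓐, A.card ≤ l)
    (hnosf : ∀ Z, Z ⊆ V → Z.card = l - 1 → 1 ≤ l → ¬ SF V Z 𝓐) :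
    ∃ f : Finset ℕ → Finset ℕ, Set.InjOn f ↑𝓐 ∧
      ∀ A ∈ 𝓐, A ⊆ f A ∧ f A ⊆ V ∧ (f A).card = l := by
  have hall : ∀ s : Finset {x // x ∈ 𝓐},
      s.card ≤ (s.biUnion fun a => (V.powersetCard l).filter fun L => a.1 ⊆ L).card := by
    intro s
    by_contra hc
    push_neg at hc
    set W := s.image Subtype.val with hWdef
    have hWs : W ⊆ 𝓐 := by
      intro A hA
      obtain ⟨a, _, rfl⟩ := Finset.mem_image.mp hA
      exact a.2
    have hWcard : W.card = s.card := Finset.card_image_of_injective _ Subtype.val_injective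
    have hNNeq : NN V l W = s.biUnion fun a => (V.powersetCard l).filter fun L => a.1 ⊆ L := by
      ext L
      simp only [mem_NN, Finset.mem_biUnion, Finset.mem_filter, Finset.mem_powersetCard, hWdef,
        Finset.mem_image]
      constructor
      · rintro ⟨⟨h1, h2⟩, A, ⟨a, ha, rfl⟩, hAL⟩
        exact ⟨a, ha, ⟨h1, h2⟩, hAL⟩
      · rintro ⟨a, ha, ⟨h1, h2⟩, hAL⟩
        exact ⟨⟨h1, h2⟩, a.1, ⟨a, ha, rfl⟩, hAL⟩
    have hviol : (NN V l W).card < W.card := by rw [hNNeq, hWcard]; exact hc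
    obtain ⟨Z, hZV, hZc, hl1, hsf⟩ := violator_sunflower hVl
      (fun A hA => hAV A (hWs hA)) (fun A hA => hAl A (hWs hA)) hviol
    exact hnosf Z hZV hZc hl1 (SF_mono hWs hsf)
  obtain ⟨f₀, hf₀inj, hf₀⟩ := (Finset.all_card_le_biUnion_card_iff_exists_injective _).mp hall
  classical
  refine ⟨fun A => if h : A ∈ 𝓐 then f₀ ⟨A, h⟩ else ∅, ?_, ?_⟩
  · intro A hA B hB hAB
    simp only [Finset.mem_coe] at hA hB
    simp only [dif_pos hA, dif_pos hB] at hAB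
    have := hf₀inj hAB
    exact congrArg Subtype.val this
  · intro A hA
    simp only [dif_pos hA]
    have h := hf₀ ⟨A, hA⟩
    simp only [Finset.mem_filter, Finset.mem_powersetCard] at h
    exact ⟨h.2, h.1.1, h.1.2⟩


lemma sf_foundIn_singleton {k : ℕ} {𝓗 : Set (Set ℕ)} {V Z : Finset ℕ}
    {W : Finset (Finset ℕ)}
    (hW𝓗 : ∀ A ∈ W, ↑A ∈ 𝓗) (hsf : SF V Z W)
    (hE : (V \ Z).card = k + 1) (hZV : Z ⊆ V) :
    FoundIn (singletonMatrix (k + 1)) 𝓗 := by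
  classical
  obtain ⟨⟨R, hRW, hRZ⟩, hwit⟩ := hsf
  set E := V \ Z with hEdef
  let σ : Fin (k + 1) ≃o {x // x ∈ E} := E.orderIsoOfFin hE
  set e : Fin (k + 1) → ℕ := fun j => (σ j : ℕ) with hedef
  have he_mem : ∀ j, e j ∈ E := fun j => (σ j).2
  have he_inj : Function.Injective e := fun j1 j2 h =>
    σ.injective (Subtype.ext h)
  have he_nZ : ∀ j, e j ∉ Z := fun j => (Finset.mem_sdiff.mp (he_mem j)).2
  have he_V : ∀ j, e j ∈ V := fun j => (Finset.mem_sdiff.mp (he_mem j)).1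
  choose C hCW hCe hCsub using fun j => hwit (e j) (he_V j) (he_nZ j)
  set H : Fin (k + 2) → Set ℕ := Fin.cases ↑R (fun j => ↑(C j)) with hHdef
  have key : ∀ i j, e j ∈ H i ↔ singletonMatrix (k + 1) i j := by
    intro i j
    induction i using Fin.cases with
    | zero =>
      simp only [hHdef, Fin.cases_zero, singletonMatrix, Fin.val_zero]
      constructor
      · intro h
        exact absurd (hRZ (Finset.mem_coe.mp h)) (he_nZ j)
      · omega
    | succ j' =>
      simp only [hHdef, Fin.cases_succ, singletonMatrix, Fin.val_succ]
      constructor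
      · intro h
        have := hCsub j' (Finset.mem_coe.mp h)
        rcases Finset.mem_insert.mp this with h' | h'
        · rw [he_inj h']
        · exact absurd h' (he_nZ j)
      · intro h
        have : j' = j := Fin.ext (by omega)
        subst this
        exact Finset.mem_coe.mpr (hCe j')
  have hinj : Function.Injective H := by
    intro i1 i2 h12
    induction i1 using Fin.cases with
    | zero =>
      induction i2 using Fin.cases with
      | zero => rfl
      | succ j2 =>
        exfalso
        have h1 : e j2 ∈ H j2.succ := (key j2.succ j2).mpr (by simp [singletonMatrix])
        rw [← h12] at h1
        have := (key 0 j2).mp h1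
        simp [singletonMatrix] at this
    | succ j1 =>
      induction i2 using Fin.cases with
      | zero =>
        exfalso
        have h1 : e j1 ∈ H j1.succ := (key j1.succ j1).mpr (by simp [singletonMatrix])
        rw [h12] at h1
        have := (key 0 j1).mp h1
        simp [singletonMatrix] at this
      | succ j2 =>
        have h1 : e j1 ∈ H j1.succ := (key j1.succ j1).mpr (by simp [singletonMatrix])
        rw [h12] at h1
        have h2 := (key j2.succ j1).mp h1
        simp only [singletonMatrix, Fin.val_succ] at h2
        congr 1
        exact Fin.ext (by omega)
  refine ⟨H, e, hinj, he_inj, ?_, ?_, key⟩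
  · intro i
    induction i using Fin.cases with
    | zero => exact hW𝓗 R hRW
    | succ j => exact hW𝓗 (C j) (hCW j)
  · intro j
    exact Set.mem_sUnion.mpr ⟨↑(C j), hW𝓗 (C j) (hCW j), Finset.mem_coe.mpr (hCe j)⟩

lemma sf_foundIn_cosingleton {l : ℕ} {𝓗 : Set (Set ℕ)} {V Z : Finset ℕ}
    {W : Finset (Finset ℕ)}
    (hW𝓗 : ∀ A ∈ W, ↑(V \ A) ∈ 𝓗) (hsf : SF V Z W)
    (hE : (V \ Z).card = l + 1) (hZV : Z ⊆ V) :
    FoundIn (cosingletonMatrix (l + 1)) 𝓗 := by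
  classical
  obtain ⟨⟨R, hRW, hRZ⟩, hwit⟩ := hsf
  set E := V \ Z with hEdef
  let σ : Fin (l + 1) ≃o {x // x ∈ E} := E.orderIsoOfFin hE
  set e : Fin (l + 1) → ℕ := fun j => (σ j : ℕ) with hedef
  have he_mem : ∀ j, e j ∈ E := fun j => (σ j).2
  have he_inj : Function.Injective e := fun j1 j2 h =>
    σ.injective (Subtype.ext h)
  have he_nZ : ∀ j, e j ∉ Z := fun j => (Finset.mem_sdiff.mp (he_mem j)).2
  have he_V : ∀ j, e j ∈ V := fun j => (Finset.mem_sdiff.mp (he_mem j)).1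
  choose C hCW hCe hCsub using fun j => hwit (e j) (he_V j) (he_nZ j)
  set H : Fin (l + 2) → Set ℕ := Fin.lastCases ↑(V \ R) (fun j => ↑(V \ C j)) with hHdef
  have key : ∀ i j, e j ∈ H i ↔ cosingletonMatrix (l + 1) i j := by
    intro i j
    induction i using Fin.lastCases with
    | last =>
      simp only [hHdef, Fin.lastCases_last, cosingletonMatrix, Fin.val_last]
      constructor
      · intro _
        have hj : (j : ℕ) < l + 1 := j.isLt
        omega
      · intro _
        refine Finset.mem_coe.mpr (Finset.mem_sdiff.mpr ⟨he_V j, fun h => ?_⟩)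
        exact (he_nZ j) (hRZ h)
    | cast j' =>
      simp only [hHdef, Fin.lastCases_castSucc, cosingletonMatrix, Fin.coe_castSucc]
      constructor
      · intro h
        have h' := (Finset.mem_sdiff.mp (Finset.mem_coe.mp h)).2
        intro hval
        have : j' = j := Fin.ext hval
        subst this
        exact h' (hCe j')
      · intro hne
        refine Finset.mem_coe.mpr (Finset.mem_sdiff.mpr ⟨he_V j, fun h => ?_⟩)
        have := hCsub j' h
        rcases Finset.mem_insert.mp this with h' | h'
        · exact hne (congrArg Fin.val (he_inj h')).symm
        · exact (he_nZ j) h'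
  have hinj : Function.Injective H := by
    intro i1 i2 h12
    induction i1 using Fin.lastCases with
    | last =>
      induction i2 using Fin.lastCases with
      | last => rfl
      | cast j2 =>
        exfalso
        have h1 : e j2 ∈ H (Fin.last (l + 1)) := (key _ j2).mpr (by
          simp [cosingletonMatrix, Fin.val_last]; omega)
        rw [h12] at h1
        have := (key (Fin.castSucc j2) j2).mp h1
        simp [cosingletonMatrix] at this
    | cast j1 =>
      induction i2 using Fin.lastCases with
      | last =>
        exfalso
        have h1 : e j1 ∈ H (Fin.last (l + 1)) := (key _ j1).mpr (by
          simp [cosingletonMatrix, Fin.val_last]; omega)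
        rw [← h12] at h1
        have := (key (Fin.castSucc j1) j1).mp h1
        simp [cosingletonMatrix] at this
      | cast j2 =>
        have h1 : e j1 ∉ H (Fin.castSucc j1) := fun h => by
          have := (key (Fin.castSucc j1) j1).mp h
          simp [cosingletonMatrix] at this
        rw [h12] at h1
        have h2 : ¬ cosingletonMatrix (l + 1) (Fin.castSucc j2) j1 := fun h => h1 ((key _ _).mpr h)
        simp only [cosingletonMatrix, Fin.coe_castSucc, not_not] at h2
        congr 1
        exact Fin.ext h2.symm
  refine ⟨H, e, hinj, he_inj, ?_, ?_, key⟩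
  · intro i
    induction i using Fin.lastCases with
    | last => simpa only [hHdef, Fin.lastCases_last] using hW𝓗 R hRW
    | cast j => simpa only [hHdef, Fin.lastCases_castSucc] using hW𝓗 (C j) (hCW j)
  · intro j
    refine Set.mem_sUnion.mpr ⟨↑(V \ R), hW𝓗 R hRW, ?_⟩
    exact Finset.mem_coe.mpr (Finset.mem_sdiff.mpr ⟨he_V j, fun h => (he_nZ j) (hRZ h)⟩)


end SubsetsOfIntervalAux

open SubsetsOfIntervalAux Finset in
/-- **Theorem 5.** If `H₁, …, H_m` are more than `(k+l).choose l` pairwise distinct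
subsets of `[k+l]`, then the `(k+1)`-singleton matrix can be found among the sets of
size at most `l`, or the `(l+1)`-cosingleton matrix can be found among the sets of
size at least `l+1`, or some set of size at most `l` is contained in some set of
size at least `l+1`. -/
theorem subsets_of_interval {k l m : ℕ} (H : Fin m → Set ℕ)
    (hinj : Function.Injective H) (hsub : ∀ i, H i ⊆ Set.Icc 1 (k + l))
    (hm : m > (k + l).choose l) :
    FoundIn (singletonMatrix (k + 1)) {S | (∃ i, H i = S) ∧ S.ncard ≤ l} ∨
    FoundIn (cosingletonMatrix (l + 1)) {S | (∃ i, H i = S) ∧ l + 1 ≤ S.ncard} ∨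
    ∃ i j, i ≠ j ∧ H j ⊆ H i ∧ (H j).ncard ≤ l ∧ l + 1 ≤ (H i).ncard := by
  classical
  by_contra hcon
  push_neg at hcon
  obtain ⟨hc1, hc2, hc3⟩ := hcon
  set V : Finset ℕ := Finset.Icc 1 (k + l) with hVdef
  have hVcard : V.card = k + l := by rw [hVdef, Nat.card_Icc]; omega
  have hfin : ∀ i, (H i).Finite := fun i => (Set.finite_Icc 1 (k + l)).subset (hsub i)
  set A : Fin m → Finset ℕ := fun i => (hfin i).toFinset with hAdef
  have hAcoe : ∀ i, ↑(A i) = H i := fun i => (hfin i).coe_toFinset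
  have hAinj : Function.Injective A := fun i j h => hinj (by rw [← hAcoe i, ← hAcoe j, h])
  have hAV : ∀ i, A i ⊆ V := by
    intro i x hx
    have hx' : x ∈ H i := by rw [← hAcoe i] at *; exact hx
    have := hsub i hx'
    rw [hVdef, Finset.mem_Icc]
    exact Set.mem_Icc.mp this
  have hAncard : ∀ i, (H i).ncard = (A i).card := fun i => by
    rw [← hAcoe i, Set.ncard_coe_finset]
  set 𝓕 : Finset (Finset ℕ) := Finset.univ.image A with h𝓕def
  have h𝓕card : 𝓕.card = m := by
    rw [h𝓕def, Finset.card_image_of_injective _ hAinj, card_univ, Fintype.card_fin]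
  have h𝓕V : ∀ B ∈ 𝓕, B ⊆ V := by
    intro B hB
    obtain ⟨i, _, rfl⟩ := Finset.mem_image.mp hB
    exact hAV i
  set 𝓢 := 𝓕.filter (fun B => B.card ≤ l) with h𝓢def
  set 𝓛 := 𝓕.filter (fun B => ¬ B.card ≤ l) with h𝓛def
  -- small side injection
  have hnosfS : ∀ Z, Z ⊆ V → Z.card = l - 1 → 1 ≤ l → ¬ SF V Z 𝓢 := by
    intro Z hZV hZc hl hsf
    apply hc1
    refine sf_foundIn_singleton (k := k) ?_ hsf ?_ hZV
    · intro B hB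
      obtain ⟨hB𝓕, hBl⟩ := Finset.mem_filter.mp hB
      obtain ⟨i, _, rfl⟩ := Finset.mem_image.mp hB𝓕
      exact ⟨⟨i, (hAcoe i).symm⟩, by rw [Set.ncard_coe_finset]; exact hBl⟩
    · rw [Finset.card_sdiff_of_subset hZV, hVcard, hZc]; omega
  obtain ⟨f, hfinj, hf⟩ := exists_injection (V := V) (l := l) (𝓐 := 𝓢)
    (by omega) (fun B hB => h𝓕V B (Finset.mem_filter.mp hB).1)
    (fun B hB => (Finset.mem_filter.mp hB).2) hnosfS
  -- large side injection via complements
  set 𝓒 := 𝓛.image (fun B => V \ B) with h𝓒def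
  have h𝓛mem : ∀ T ∈ 𝓛, T ⊆ V ∧ l + 1 ≤ T.card := by
    intro T hT
    obtain ⟨hT𝓕, hTl⟩ := Finset.mem_filter.mp hT
    exact ⟨h𝓕V T hT𝓕, by omega⟩
  have hnosfL : ∀ Z, Z ⊆ V → Z.card = k - 1 → 1 ≤ k → ¬ SF V Z 𝓒 := by
    intro Z hZV hZc hk hsf
    apply hc2
    refine sf_foundIn_cosingleton (l := l) ?_ hsf ?_ hZV
    · intro B hB
      obtain ⟨T, hT, rfl⟩ := Finset.mem_image.mp hB
      obtain ⟨hTV, hTl⟩ := h𝓛mem T hT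
      rw [Finset.sdiff_sdiff_eq_self hTV]
      obtain ⟨i, _, rfl⟩ := Finset.mem_image.mp (Finset.mem_filter.mp hT).1
      exact ⟨⟨i, (hAcoe i).symm⟩, by rw [Set.ncard_coe_finset]; exact hTl⟩
    · have hk1 : k - 1 + (l + 1) = k + l := by omega
      rw [Finset.card_sdiff_of_subset hZV, hVcard, hZc]; omega
  obtain ⟨g, hginj, hg⟩ := exists_injection (V := V) (l := k) (𝓐 := 𝓒)
    (by omega)
    (by
      intro B hB
      obtain ⟨T, hT, rfl⟩ := Finset.mem_image.mp hB
      exact Finset.sdiff_subset)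
    (by
      intro B hB
      obtain ⟨T, hT, rfl⟩ := Finset.mem_image.mp hB
      obtain ⟨hTV, hTl⟩ := h𝓛mem T hT
      rw [Finset.card_sdiff_of_subset hTV, hVcard]
      omega)
    hnosfL
  -- combine the two injections
  set F : Finset ℕ → Finset ℕ := fun B => if B.card ≤ l then f B else V \ g (V \ B) with hFdef
  have hgprop : ∀ T ∈ 𝓛, (V \ g (V \ T)) ⊆ T ∧ (V \ g (V \ T)).card = l ∧ g (V \ T) ⊆ V := by
    intro T hT
    obtain ⟨hTV, hTl⟩ := h𝓛mem T hT
    have hmem𝓒 : V \ T ∈ 𝓒 := Finset.mem_image_of_mem _ hT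
    obtain ⟨hsub1, hsub2, hcard⟩ := hg (V \ T) hmem𝓒
    refine ⟨?_, ?_, hsub2⟩
    · intro x hx
      obtain ⟨hxV, hxg⟩ := Finset.mem_sdiff.mp hx
      by_contra hxT
      exact hxg (hsub1 (Finset.mem_sdiff.mpr ⟨hxV, hxT⟩))
    · rw [Finset.card_sdiff_of_subset hsub2, hVcard, hcard]; omega
  have hmaps : ∀ B ∈ 𝓕, F B ∈ V.powersetCard l := by
    intro B hB
    rw [hFdef]
    by_cases hBl : B.card ≤ l
    · simp only [if_pos hBl]
      have hB𝓢 : B ∈ 𝓢 := Finset.mem_filter.mpr ⟨hB, hBl⟩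
      obtain ⟨_, h2, h3⟩ := hf B hB𝓢
      exact Finset.mem_powersetCard.mpr ⟨h2, h3⟩
    · simp only [if_neg hBl]
      have hB𝓛 : B ∈ 𝓛 := Finset.mem_filter.mpr ⟨hB, hBl⟩
      obtain ⟨_, h2, _⟩ := hgprop B hB𝓛
      exact Finset.mem_powersetCard.mpr ⟨Finset.sdiff_subset, h2⟩
  have hinjF : Set.InjOn F ↑𝓕 := by
    intro B1 hB1 B2 hB2 hF12
    simp only [Finset.mem_coe] at hB1 hB2
    rw [hFdef] at hF12
    simp only at hF12
    by_cases h1 : B1.card ≤ l <;> by_cases h2 : B2.card ≤ l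
    · rw [if_pos h1, if_pos h2] at hF12
      exact hfinj (Finset.mem_coe.mpr (Finset.mem_filter.mpr ⟨hB1, h1⟩))
        (Finset.mem_coe.mpr (Finset.mem_filter.mpr ⟨hB2, h2⟩)) hF12
    · -- mixed : B1 small, B2 large
      exfalso
      rw [if_pos h1, if_neg h2] at hF12
      have hB1𝓢 : B1 ∈ 𝓢 := Finset.mem_filter.mpr ⟨hB1, h1⟩
      have hB2𝓛 : B2 ∈ 𝓛 := Finset.mem_filter.mpr ⟨hB2, h2⟩
      have hsub12 : B1 ⊆ B2 := by
        have ha := (hf B1 hB1𝓢).1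
        have hb := (hgprop B2 hB2𝓛).1
        rw [hF12] at ha
        exact ha.trans hb
      obtain ⟨i1, _, hA1⟩ := Finset.mem_image.mp hB1
      obtain ⟨i2, _, hA2⟩ := Finset.mem_image.mp hB2
      have hne : i2 ≠ i1 := by
        intro h
        rw [h, hA1] at hA2
        subst hA2
        omega
      refine absurd (?_ : H i1 ⊆ H i2) (by
        have := hc3 i2 i1 hne
        intro hfull
        have h1' : (H i1).ncard ≤ l := by rw [hAncard, hA1]; exact h1
        have h2' : l + 1 ≤ (H i2).ncard := by rw [hAncard, hA2]; omega
        exact absurd h2' (by simpa using this hfull h1'))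
      rw [← hAcoe i1, ← hAcoe i2, hA1, hA2]
      exact Finset.coe_subset.mpr hsub12
    · -- mixed : B1 large, B2 small
      exfalso
      rw [if_neg h1, if_pos h2] at hF12
      have hB2𝓢 : B2 ∈ 𝓢 := Finset.mem_filter.mpr ⟨hB2, h2⟩
      have hB1𝓛 : B1 ∈ 𝓛 := Finset.mem_filter.mpr ⟨hB1, h1⟩
      have hsub12 : B2 ⊆ B1 := by
        have ha := (hf B2 hB2𝓢).1
        have hb := (hgprop B1 hB1𝓛).1
        rw [← hF12] at ha
        exact ha.trans hb
      obtain ⟨i1, _, hA1⟩ := Finset.mem_image.mp hB1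
      obtain ⟨i2, _, hA2⟩ := Finset.mem_image.mp hB2
      have hne : i1 ≠ i2 := by
        intro h
        rw [h, hA2] at hA1
        subst hA1
        omega
      refine absurd (?_ : H i2 ⊆ H i1) (by
        have := hc3 i1 i2 hne
        intro hfull
        have h2' : (H i2).ncard ≤ l := by rw [hAncard, hA2]; exact h2
        have h1' : l + 1 ≤ (H i1).ncard := by rw [hAncard, hA1]; omega
        exact absurd h1' (by simpa using this hfull h2'))
      rw [← hAcoe i1, ← hAcoe i2, hA1, hA2]
      exact Finset.coe_subset.mpr hsub12
    · rw [if_neg h1, if_neg h2] at hF12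
      have hB1𝓛 : B1 ∈ 𝓛 := Finset.mem_filter.mpr ⟨hB1, h1⟩
      have hB2𝓛 : B2 ∈ 𝓛 := Finset.mem_filter.mpr ⟨hB2, h2⟩
      have hgV1 := (hgprop B1 hB1𝓛).2.2
      have hgV2 := (hgprop B2 hB2𝓛).2.2
      have hgeq : g (V \ B1) = g (V \ B2) := by
        rw [← Finset.sdiff_sdiff_eq_self hgV1, ← Finset.sdiff_sdiff_eq_self hgV2, hF12]
      have := hginj (Finset.mem_coe.mpr (Finset.mem_image_of_mem _ hB1𝓛))
        (Finset.mem_coe.mpr (Finset.mem_image_of_mem _ hB2𝓛)) hgeq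
      have hB1V := h𝓕V B1 hB1
      have hB2V := h𝓕V B2 hB2
      rw [← Finset.sdiff_sdiff_eq_self hB1V, ← Finset.sdiff_sdiff_eq_self hB2V, this]
  have hle : 𝓕.card ≤ (V.powersetCard l).card :=
    Finset.card_le_card_of_injOn F hmaps hinjF
  rw [h𝓕card, Finset.card_powersetCard, hVcard] at hle
  omega
end

section
/- Let k and l be natural numbers and let 𝓗 = {H₁, H₂, …, H_m} be a collection of m pairwise distinct finite sets, each of cardinality at most l. If m > (k+l choose l), then the (k+1)-singleton matrix can be found in 𝓗. -/
open Polynomial Finset in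
lemma skew_bollobas_exact {m a b : ℕ} (A B : Fin m → Finset ℝ)
    (hA : ∀ i, (A i).card ≤ a) (hB : ∀ i, (B i).card = b)
    (hd : ∀ i, Disjoint (A i) (B i))
    (hskew : ∀ i j : Fin m, i < j → ((A i) ∩ (B j)).Nonempty) :
    m ≤ (a + b).choose b := by
  classical
  set P : Fin m → ℝ[X] := fun i => ∏ v ∈ A i, (X - C v) with hP
  have hPdeg : ∀ i, (P i).natDegree < a + 1 := by
    intro i
    have h1 : (P i).natDegree ≤ ∑ v ∈ A i, (X - C v).natDegree :=
      Polynomial.natDegree_prod_le _ _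
    simp only [Polynomial.natDegree_X_sub_C, Finset.sum_const, smul_eq_mul, mul_one] at h1
    have := hA i; omega
  set β : Fin m → Fin b → ℝ := fun j r => ((B j).orderIsoOfFin (hB j) r : ℝ) with hβ
  have hβmem : ∀ j r, β j r ∈ B j := fun j r => ((B j).orderIsoOfFin (hB j) r).2
  have hβsurj : ∀ j v, v ∈ B j → ∃ r, β j r = v := by
    intro j v hv
    obtain ⟨r, hr⟩ := ((B j).orderIsoOfFin (hB j)).surjective ⟨v, hv⟩
    exact ⟨r, congrArg Subtype.val hr⟩
  set M : Matrix (Fin m) (Fin m) ℝ :=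
    Matrix.of fun i j => ∏ r : Fin b, (P i).eval (β j r) with hM
  have hMtri : ∀ i j, i < j → M i j = 0 := by
    intro i j hij
    obtain ⟨v, hv⟩ := hskew i j hij
    obtain ⟨hvA, hvB⟩ := Finset.mem_inter.mp hv
    obtain ⟨r, hr⟩ := hβsurj j v hvB
    apply Finset.prod_eq_zero (Finset.mem_univ r)
    rw [hr, hP]
    simp only [Polynomial.eval_prod]
    apply Finset.prod_eq_zero hvA
    simp
  have hMdiag : ∀ i, M i i ≠ 0 := by
    intro i
    show (∏ r : Fin b, (P i).eval (β i r)) ≠ 0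
    apply Finset.prod_ne_zero_iff.mpr
    intro r _
    rw [hP]
    simp only [Polynomial.eval_prod]
    apply Finset.prod_ne_zero_iff.mpr
    intro v hv
    simp only [Polynomial.eval_sub, Polynomial.eval_X, Polynomial.eval_C]
    have : β i r ≠ v := by
      intro h
      exact (Finset.disjoint_right.mp (hd i)) (hβmem i r) (h ▸ hv)
    exact sub_ne_zero.mpr this
  set c : Fin m → Fin (a + 1) → ℝ := fun i d => (P i).coeff d with hc
  set key : (Fin b → Fin (a + 1)) → Sym (Fin (a + 1)) b :=
    fun μ => ⟨Finset.univ.val.map μ, by simp⟩ with hkey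
  set U : Matrix (Fin m) (Sym (Fin (a + 1)) b) ℝ :=
    Matrix.of fun i s => (Multiset.map (c i) s.1).prod with hU
  set V : Matrix (Sym (Fin (a + 1)) b) (Fin m) ℝ :=
    Matrix.of fun s j =>
      ∑ μ ∈ Finset.univ.filter (fun μ : Fin b → Fin (a + 1) => key μ = s),
        ∏ r : Fin b, (β j r) ^ (μ r : ℕ) with hV
  have hUkey : ∀ i μ, U i (key μ) = ∏ r : Fin b, c i (μ r) := by
    intro i μ
    show (Multiset.map (c i) (Finset.univ.val.map μ)).prod = _
    rw [Multiset.map_map]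
    rfl
  have hMeval : ∀ i j, M i j =
      ∑ μ : Fin b → Fin (a + 1), (∏ r : Fin b, c i (μ r)) * ∏ r : Fin b, (β j r) ^ (μ r : ℕ) := by
    intro i j
    have hev : ∀ r : Fin b, (P i).eval (β j r) = ∑ d : Fin (a + 1), c i d * (β j r) ^ (d : ℕ) := by
      intro r
      rw [Polynomial.eval_eq_sum_range' (hPdeg i), ← Fin.sum_univ_eq_sum_range]
    show (∏ r : Fin b, (P i).eval (β j r)) = _
    rw [Finset.prod_congr rfl fun r _ => hev r]
    rw [Fintype.prod_sum (fun r (d : Fin (a+1)) => c i d * (β j r) ^ (d : ℕ))]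
    exact Finset.sum_congr rfl fun μ _ => Finset.prod_mul_distrib
  have hMUV : M = U * V := by
    ext i j
    rw [Matrix.mul_apply, hMeval i j]
    rw [← Finset.sum_fiberwise Finset.univ key
      (fun μ => (∏ r : Fin b, c i (μ r)) * ∏ r : Fin b, (β j r) ^ (μ r : ℕ))]
    apply Finset.sum_congr rfl
    intro s _
    have : ∀ μ ∈ Finset.univ.filter (fun μ : Fin b → Fin (a + 1) => key μ = s),
        (∏ r : Fin b, c i (μ r)) * ∏ r : Fin b, (β j r) ^ (μ r : ℕ)
          = U i s * ∏ r : Fin b, (β j r) ^ (μ r : ℕ) := by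
      intro μ hμ
      have := (Finset.mem_filter.mp hμ).2
      rw [← this, hUkey]
    rw [Finset.sum_congr rfl this, ← Finset.mul_sum]
    rfl
  have hdet : M.det ≠ 0 := by
    have htri : M.BlockTriangular OrderDual.toDual := fun i j h => hMtri i j h
    rw [Matrix.det_of_lowerTriangular M htri]
    exact Finset.prod_ne_zero_iff.mpr fun i _ => hMdiag i
  have hrank : M.rank = m := by
    rw [Matrix.rank_of_isUnit M ((Matrix.isUnit_iff_isUnit_det M).mpr
      (isUnit_iff_ne_zero.mpr hdet))]
    simp
  have h1 : M.rank ≤ Fintype.card (Sym (Fin (a + 1)) b) := by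
    rw [hMUV]
    exact le_trans (Matrix.rank_mul_le_left U V) (Matrix.rank_le_card_width U)
  have hcard : Fintype.card (Sym (Fin (a + 1)) b) = (a + b).choose b := by
    rw [Sym.card_sym_eq_choose, Fintype.card_fin]
    congr 1
    omega
  omega

lemma skew_bollobas {m a b : ℕ} (A B : Fin m → Finset ℝ)
    (hA : ∀ i, (A i).card ≤ a) (hB : ∀ i, (B i).card ≤ b)
    (hd : ∀ i, Disjoint (A i) (B i))
    (hskew : ∀ i j : Fin m, i < j → ((A i) ∩ (B j)).Nonempty) :
    m ≤ (a + b).choose b := by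
  classical
  set T : Finset ℝ := Finset.univ.biUnion A ∪ Finset.univ.biUnion B with hT
  have hTc : (↑T : Set ℝ)ᶜ.Infinite := Set.Finite.infinite_compl (T.finite_toSet)
  obtain ⟨Pad, hPadsub, hPadcard⟩ := hTc.exists_subset_card_eq b
  have hPadT : ∀ x ∈ Pad, x ∉ T := by
    intro x hx
    have := hPadsub hx
    simpa using this
  have hS : ∀ i : Fin m, ∃ S : Finset ℝ, S ⊆ Pad ∧ S.card = b - (B i).card := by
    intro i
    exact Finset.exists_subset_card_eq (by omega)
  choose S hSsub hScard using hS
  set B' : Fin m → Finset ℝ := fun i => B i ∪ S i with hB'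
  have hBsubT : ∀ i, B i ⊆ T := by
    intro i x hx
    exact Finset.mem_union_right _ (Finset.mem_biUnion.mpr ⟨i, Finset.mem_univ i, hx⟩)
  have hAsubT : ∀ i, A i ⊆ T := by
    intro i x hx
    exact Finset.mem_union_left _ (Finset.mem_biUnion.mpr ⟨i, Finset.mem_univ i, hx⟩)
  have hSdisj : ∀ i j : Fin m, Disjoint (S i) (B j) := by
    intro i j
    rw [Finset.disjoint_left]
    intro x hx hxB
    exact hPadT x (hSsub i hx) (hBsubT j hxB)
  have hSdisjA : ∀ i j : Fin m, Disjoint (S i) (A j) := by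
    intro i j
    rw [Finset.disjoint_left]
    intro x hx hxA
    exact hPadT x (hSsub i hx) (hAsubT j hxA)
  apply skew_bollobas_exact A B' hA
  · intro i
    rw [hB']
    rw [Finset.card_union_of_disjoint (hSdisj i i).symm, hScard]
    have := hB i; omega
  · intro i
    rw [hB']
    rw [Finset.disjoint_union_right]
    exact ⟨hd i, (hSdisjA i i).symm⟩
  · intro i j hij
    obtain ⟨x, hx⟩ := hskew i j hij
    rw [Finset.mem_inter] at hx
    exact ⟨x, Finset.mem_inter.mpr ⟨hx.1, Finset.mem_union_left _ hx.2⟩⟩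

/-- **Theorem (Füredi–Tuza).** In any collection of more than `(k+l).choose l`
pairwise distinct finite sets, each of cardinality at most `l`, the
`(k+1)`-singleton matrix can be found. -/
theorem furedi_tuza {α : Type*} (k l m : ℕ) (H : Fin m → Set α)
    (hinj : Function.Injective H) (hfin : ∀ i, (H i).Finite)
    (hcard : ∀ i, (H i).ncard ≤ l) (hm : m > (k + l).choose l) :
    FoundIn (singletonMatrix (k + 1)) (Set.range H) := by
  classical
  by_contra hcon
  set f : Fin m → ℕ := fun i => ((hfin i).toFinset).card with hf
  set σ : Equiv.Perm (Fin m) := Tuple.sort f with hσ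
  set G : Fin m → Finset α := fun i => (hfin (σ i)).toFinset with hG
  have hGcoe : ∀ i, (↑(G i) : Set α) = H (σ i) := fun i => Set.Finite.coe_toFinset _
  have hGmem : ∀ i x, x ∈ G i ↔ x ∈ H (σ i) := fun i x => Set.Finite.mem_toFinset _
  have hGinj : Function.Injective G := by
    intro i j h
    apply σ.injective
    apply hinj
    rw [← hGcoe, ← hGcoe, h]
  have hGmono : ∀ i j : Fin m, i ≤ j → (G i).card ≤ (G j).card := by
    intro i j h
    exact Tuple.monotone_sort f h
  have hGcard : ∀ i, (G i).card ≤ l := by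
    intro i
    have : (H (σ i)).ncard = (G i).card := Set.ncard_eq_toFinset_card _ _
    rw [← this]
    exact hcard (σ i)
  have hGdiff : ∀ i j : Fin m, i < j → (G j \ G i).Nonempty := by
    intro i j hij
    rw [Finset.sdiff_nonempty]
    intro hsub
    have : G j = G i := Finset.eq_of_subset_of_card_le hsub (hGmono i j hij.le)
    exact absurd (hGinj this) hij.ne'
  -- the transversal construction
  have hWex : ∀ i : Fin m, ∃ W : Finset α,
      (∀ x ∈ W, ∃ j, i < j ∧ x ∈ G j \ G i) ∧
      (∀ j, i < j → (W ∩ (G j \ G i)).Nonempty) ∧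
      W.card ≤ k := by
    intro i
    set U : Finset α := (Finset.univ.filter (fun j => i < j)).biUnion (fun j => G j \ G i) with hUdef
    have hUmem : ∀ x, x ∈ U ↔ ∃ j, i < j ∧ x ∈ G j \ G i := by
      intro x
      simp [hUdef]
    set C : Finset (Finset α) :=
      U.powerset.filter (fun W => ∀ j, i < j → (W ∩ (G j \ G i)).Nonempty) with hC
    have hUC : U ∈ C := by
      refine Finset.mem_filter.mpr ⟨Finset.mem_powerset_self U, ?_⟩
      intro j hj
      obtain ⟨x, hx⟩ := hGdiff i j hj
      exact ⟨x, Finset.mem_inter.mpr ⟨(hUmem x).mpr ⟨j, hj, hx⟩, hx⟩⟩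
    obtain ⟨W, hWC, hWmin⟩ := Finset.exists_min_image C Finset.card ⟨U, hUC⟩
    have hWU : W ⊆ U := Finset.mem_powerset.mp (Finset.mem_filter.mp hWC).1
    have hWtrans : ∀ j, i < j → ((W ∩ (G j \ G i)).Nonempty) := (Finset.mem_filter.mp hWC).2
    have hWwit : ∀ w ∈ W, ∃ j, i < j ∧ W ∩ (G j \ G i) = {w} := by
      intro w hw
      by_contra hno
      push_neg at hno
      have herase : W.erase w ∈ C := by
        refine Finset.mem_filter.mpr
          ⟨Finset.mem_powerset.mpr ((Finset.erase_subset w W).trans hWU), ?_⟩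
        intro j hj
        obtain ⟨x, hx⟩ := hWtrans j hj
        have hxw : ∃ y ∈ W ∩ (G j \ G i), y ≠ w := by
          by_contra hall
          push_neg at hall
          have hwmem : w ∈ W ∩ (G j \ G i) := by
            obtain ⟨y, hy⟩ := hWtrans j hj
            have := hall y hy
            rwa [this] at hy
          have : W ∩ (G j \ G i) = {w} :=
            Finset.eq_singleton_iff_unique_mem.mpr ⟨hwmem, hall⟩
          exact hno j hj this
        obtain ⟨y, hy, hyw⟩ := hxw
        rw [Finset.mem_inter] at hy
        exact ⟨y, Finset.mem_inter.mpr ⟨Finset.mem_erase.mpr ⟨hyw, hy.1⟩, hy.2⟩⟩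
      have hle := hWmin _ herase
      rw [Finset.card_erase_of_mem hw] at hle
      have hpos : 0 < W.card := Finset.card_pos.mpr ⟨w, hw⟩
      omega
    refine ⟨W, fun x hx => (hUmem x).mp (hWU hx), hWtrans, ?_⟩
    -- card bound via non-existence of the singleton matrix
    by_contra hk
    push_neg at hk
    obtain ⟨W', hW'sub, hW'card⟩ := Finset.exists_subset_card_eq (by omega : k + 1 ≤ W.card)
    have hcardW' : Fintype.card {x // x ∈ W'} = k + 1 := by
      rw [Fintype.card_coe]; exact hW'card
    set ψ : Fin (k + 1) ≃ {x // x ∈ W'} := (Fintype.equivFinOfCardEq hcardW').symm with hψ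
    set e : Fin (k + 1) → α := fun t => (ψ t : α) with he
    have heinj : Function.Injective e := by
      intro s t h
      exact ψ.injective (Subtype.val_injective h)
    have heW : ∀ t, e t ∈ W := fun t => hW'sub (ψ t).2
    have hjex : ∀ t : Fin (k + 1), ∃ j, i < j ∧ W ∩ (G j \ G i) = {e t} :=
      fun t => hWwit (e t) (heW t)
    choose j hij hjsing using hjex
    have het : ∀ t, e t ∈ G (j t) ∧ e t ∉ G i := by
      intro t
      have : e t ∈ W ∩ (G (j t) \ G i) := by
        rw [hjsing t]; exact Finset.mem_singleton_self _
      have := (Finset.mem_inter.mp this).2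
      rw [Finset.mem_sdiff] at this
      exact this
    have hjinj : Function.Injective j := by
      intro s t h
      apply heinj
      have h1 : W ∩ (G (j s) \ G i) = {e s} := hjsing s
      have h2 : W ∩ (G (j t) \ G i) = {e t} := hjsing t
      rw [h] at h1
      rw [h1] at h2
      exact Finset.singleton_injective h2
    set ι : Fin (k + 2) → Fin m := Fin.cases i j with hι
    have hι0 : ι 0 = i := rfl
    have hιs : ∀ t, ι (Fin.succ t) = j t := fun t => by
      rw [hι]; simp
    have hιinj : Function.Injective ι := by
      intro s t h
      rcases Fin.eq_zero_or_eq_succ s with rfl | ⟨s', rfl⟩ <;>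
        rcases Fin.eq_zero_or_eq_succ t with rfl | ⟨t', rfl⟩
      · rfl
      · rw [hι0, hιs] at h
        exact absurd h.symm (hij t').ne'
      · rw [hι0, hιs] at h
        exact absurd h (hij s').ne'
      · rw [hιs, hιs] at h
        rw [hjinj h]
    set R : Fin (k + 2) → Set α := fun r => H (σ (ι r)) with hR
    apply hcon
    refine ⟨R, e, ?_, heinj, ?_, ?_, ?_⟩
    · -- injective R
      intro s t h
      exact hιinj (σ.injective (hinj h))
    · -- membership in range
      intro r
      exact ⟨σ (ι r), rfl⟩
    · -- witnesses in union
      intro t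
      refine Set.mem_sUnion.mpr ⟨H (σ (j t)), ⟨σ (j t), rfl⟩, ?_⟩
      rw [← hGmem]
      exact (het t).1
    · -- the pattern
      intro r t
      rcases Fin.eq_zero_or_eq_succ r with rfl | ⟨r', rfl⟩
      · rw [hR]
        show e t ∈ H (σ (ι 0)) ↔ _
        rw [hι0]
        constructor
        · intro hmem
          exact absurd ((hGmem i (e t)).mpr hmem) (het t).2
        · intro hpat
          exact absurd hpat (by simp [singletonMatrix])
      · rw [hR]
        show e t ∈ H (σ (ι (Fin.succ r'))) ↔ _
        rw [hιs]
        constructor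
        · intro hmem
          have hGm : e t ∈ G (j r') := (hGmem _ _).mpr hmem
          have : e t ∈ W ∩ (G (j r') \ G i) :=
            Finset.mem_inter.mpr ⟨heW t, Finset.mem_sdiff.mpr ⟨hGm, (het t).2⟩⟩
          rw [hjsing r'] at this
          have := Finset.mem_singleton.mp this
          have hrt : r' = t := heinj this.symm
          show (Fin.succ r' : ℕ) = (t : ℕ) + 1
          rw [hrt]
          simp
        · intro hpat
          have : (Fin.succ r' : ℕ) = (t : ℕ) + 1 := hpat
          have hrt : r' = t := by
            apply Fin.val_injective
            simpa using this
          rw [hrt, ← hGmem]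
          exact (het t).1
  choose W hWsub hWtrans hWcard using hWex
  -- map to ℝ
  set UU : Finset α := Finset.univ.biUnion G with hUU
  have hGsubUU : ∀ i, G i ⊆ UU := fun i =>
    Finset.subset_biUnion_of_mem G (Finset.mem_univ i)
  have hWsubUU : ∀ i, W i ⊆ UU := by
    intro i x hx
    obtain ⟨jx, _, hmem⟩ := hWsub i x hx
    exact hGsubUU jx (Finset.mem_sdiff.mp hmem).1
  set ρ : α → ℝ := fun x =>
    if h : x ∈ UU then ((Fintype.equivFin {y // y ∈ UU} ⟨x, h⟩ : ℕ) : ℝ) else 0 with hρ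
  have hρinj : ∀ x ∈ UU, ∀ y ∈ UU, ρ x = ρ y → x = y := by
    intro x hx y hy hxy
    rw [hρ] at hxy
    simp only [dif_pos hx, dif_pos hy] at hxy
    have := Nat.cast_injective (R := ℝ) hxy
    have := (Fintype.equivFin {y // y ∈ UU}).injective (Fin.val_injective this)
    exact Subtype.mk_eq_mk.mp this
  have := skew_bollobas (m := m) (a := k) (b := l)
    (fun i => (W i).image ρ) (fun i => (G i).image ρ)
    (fun i => le_trans Finset.card_image_le (hWcard i))
    (fun i => le_trans Finset.card_image_le (hGcard i))
    (by
      intro i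
      rw [Finset.disjoint_left]
      intro x hx hxG
      obtain ⟨w, hw, hwx⟩ := Finset.mem_image.mp hx
      obtain ⟨g, hg, hgx⟩ := Finset.mem_image.mp hxG
      have : w = g := hρinj w (hWsubUU i hw) g (hGsubUU i hg) (by rw [hwx, hgx])
      obtain ⟨jw, _, hmem⟩ := hWsub i w hw
      exact (Finset.mem_sdiff.mp hmem).2 (this ▸ hg))
    (by
      intro i jj hij
      obtain ⟨x, hx⟩ := hWtrans i jj hij
      rw [Finset.mem_inter, Finset.mem_sdiff] at hx
      exact ⟨ρ x, Finset.mem_inter.mpr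
        ⟨Finset.mem_image_of_mem ρ hx.1, Finset.mem_image_of_mem ρ hx.2.1⟩⟩)
  omega
end

section
/- Let k and l be natural numbers, let A₁, A₂, …, A_m be finite sets each of cardinality at most l, and let B₁, B₂, …, B_m be finite sets each of cardinality at most k, such that A_i ∩ B_i = ∅ for every i, and A_i ∩ B_j ≠ ∅ for all i > j. Then m ≤ (k+l choose l). -/
open Matrix Finset Function

theorem FK.append_update {l k : ℕ} [DecidableEq (Fin k)] {γ : Type*} (u : Fin l → γ) (w : Fin k → γ) (q : Fin k) (x : γ) :
    Fin.append u (Function.update w q x) = Function.update (Fin.append u w) (Fin.natAdd l q) x := by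
  funext s
  refine Fin.addCases (fun p => ?_) (fun q' => ?_) s
  · rw [Fin.append_left, Function.update_of_ne (by simp [Fin.ext_iff]; omega), Fin.append_left]
  · by_cases hq : q' = q
    · subst hq; rw [Fin.append_right, Function.update_self, Function.update_self]
    · rw [Fin.append_right, Function.update_of_ne hq,
        Function.update_of_ne (by simpa [Fin.ext_iff] using fun h => hq (Fin.ext h)),
        Fin.append_right]

/-- det of matrix with first `l` rows fixed, as alternating map in remaining `k` rows. -/
def FK.detAux {l k : ℕ} (u : Fin l → (Fin (l + k) → ℝ)) :
    (Fin (l + k) → ℝ) [⋀^Fin k]→ₗ[ℝ] ℝ where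
  toFun w := (Matrix.of (Fin.append u w)).det
  map_update_add' w q x y := by
    rw [FK.append_update u w q (x + y), FK.append_update u w q x, FK.append_update u w q y]
    exact Matrix.det_updateRow_add (Matrix.of (Fin.append u w)) (Fin.natAdd l q) x y
  map_update_smul' w q c x := by
    rw [FK.append_update u w q (c • x), FK.append_update u w q x]
    exact Matrix.det_updateRow_smul (Matrix.of (Fin.append u w)) (Fin.natAdd l q) c x
  map_eq_zero_of_eq' w q₁ q₂ h hne := by
    refine Matrix.det_zero_of_row_eq (M := Matrix.of (Fin.append u w))
      (i := Fin.natAdd l q₁) (j := Fin.natAdd l q₂) ?_ ?_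
    · intro hh
      apply hne
      rw [Fin.ext_iff] at hh ⊢
      simpa using hh
    · show Fin.append u w _ = Fin.append u w _
      rw [Fin.append_right, Fin.append_right, h]

theorem FK.comp_append {l k : ℕ} {γ δ : Type*} (f : γ → δ) (u : Fin l → γ) (w : Fin k → γ) :
    (fun s => f (Fin.append u w s)) = Fin.append (fun p => f (u p)) (fun q => f (w q)) := by
  funext s
  refine Fin.addCases (fun p => ?_) (fun q => ?_) s <;>
    simp [Fin.append_left, Fin.append_right]

theorem FK.aux (k l m : ℕ) (A B : Fin m → Finset ℕ)
    (hA : ∀ i, (A i).card = l) (hB : ∀ i, (B i).card = k)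
    (hdisj : ∀ i, A i ∩ B i = ∅)
    (hcross : ∀ i j, j < i → (A i ∩ B j).Nonempty) :
    m ≤ (k + l).choose l := by
  classical
  let V : ℕ → Fin (l + k) → ℝ := fun x j => (x : ℝ) ^ (j : ℕ)
  let a : ∀ _ : Fin m, Fin l → ℕ := fun i => (A i).orderEmbOfFin (hA i)
  let b : ∀ _ : Fin m, Fin k → ℕ := fun i => (B i).orderEmbOfFin (hB i)
  let f : Fin m → ((Fin (l + k) → ℝ) [⋀^Fin k]→ₗ[ℝ] ℝ) := fun i => FK.detAux (fun p => V (a i p))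
  have hfeval : ∀ i j, f i (fun q => V (b j q)) =
      (Matrix.of (Fin.append (fun p => V (a i p)) (fun q => V (b j q)))).det := fun _ _ => rfl
  have hzero : ∀ i j, (A i ∩ B j).Nonempty → f i (fun q => V (b j q)) = 0 := by
    rintro i j ⟨x, hx⟩
    rw [Finset.mem_inter] at hx
    rw [hfeval]
    set p := ((A i).orderIsoOfFin (hA i)).symm ⟨x, hx.1⟩ with hp
    set q := ((B j).orderIsoOfFin (hB j)).symm ⟨x, hx.2⟩ with hq
    have hap : a i p = x := by
      show ((A i).orderEmbOfFin (hA i)) p = x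
      rw [← Finset.coe_orderIsoOfFin_apply, hp, OrderIso.apply_symm_apply]
    have hbq : b j q = x := by
      show ((B j).orderEmbOfFin (hB j)) q = x
      rw [← Finset.coe_orderIsoOfFin_apply, hq, OrderIso.apply_symm_apply]
    refine Matrix.det_zero_of_row_eq (i := Fin.castAdd k p) (j := Fin.natAdd l q) ?_ ?_
    · simp [Fin.ext_iff]; omega
    · show Fin.append (fun p => V (a i p)) (fun q => V (b j q)) (Fin.castAdd k p) =
        Fin.append (fun p => V (a i p)) (fun q => V (b j q)) (Fin.natAdd l q)
      rw [Fin.append_left, Fin.append_right, hap, hbq]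
  have hnonzero : ∀ i, f i (fun q => V (b i q)) ≠ 0 := by
    intro i
    rw [hfeval]
    have hmat : Matrix.of (Fin.append (fun p => V (a i p)) (fun q => V (b i q))) =
        Matrix.vandermonde (fun s => ((Fin.append (a i) (b i) s : ℕ) : ℝ)) := by
      ext s t
      show Fin.append (fun p => V (a i p)) (fun q => V (b i q)) s t = _
      rw [← FK.comp_append (fun x => V x)]
      rfl
    rw [hmat]
    refine Matrix.det_vandermonde_ne_zero_iff.mpr ?_
    have hmemA : ∀ p, a i p ∈ A i := fun p => (A i).orderEmbOfFin_mem (hA i) p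
    have hmemB : ∀ q, b i q ∈ B i := fun q => (B i).orderEmbOfFin_mem (hB i) q
    have hAB : ∀ p q, a i p ≠ b i q := by
      intro p q h
      have : a i p ∈ A i ∩ B i := Finset.mem_inter.2 ⟨hmemA p, h ▸ hmemB q⟩
      simp [hdisj i] at this
    have hcases : ∀ s : Fin (l + k), (∃ p, s = Fin.castAdd k p) ∨ (∃ q, s = Fin.natAdd l q) :=
      fun s => Fin.addCases (fun p => Or.inl ⟨p, rfl⟩) (fun q => Or.inr ⟨q, rfl⟩) s
    intro s₁ s₂ h
    have h' : Fin.append (a i) (b i) s₁ = Fin.append (a i) (b i) s₂ :=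
      Nat.cast_injective h
    rcases hcases s₁ with ⟨p₁, rfl⟩ | ⟨q₁, rfl⟩ <;> rcases hcases s₂ with ⟨p₂, rfl⟩ | ⟨q₂, rfl⟩
    · rw [Fin.append_left, Fin.append_left] at h'
      exact congrArg (Fin.castAdd k) (((A i).orderEmbOfFin (hA i)).injective h')
    · rw [Fin.append_left, Fin.append_right] at h'
      exact absurd h' (hAB _ _)
    · rw [Fin.append_right, Fin.append_left] at h'
      exact absurd h'.symm (hAB _ _)
    · rw [Fin.append_right, Fin.append_right] at h'
      exact congrArg (Fin.natAdd l) (((B i).orderEmbOfFin (hB i)).injective h')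
  let e := Pi.basisFun ℝ (Fin (l + k))
  let u : Fin m → ({S : Finset (Fin (l + k)) // S.card = k} → ℝ) :=
    fun i S => f i (fun q => e (S.1.orderEmbOfFin S.2 q))
  have hu : LinearIndependent ℝ u := by
    rw [Fintype.linearIndependent_iff]
    intro c hc
    set g : (Fin (l + k) → ℝ) [⋀^Fin k]→ₗ[ℝ] ℝ := ∑ i, c i • f i with hgdef
    have hgapp : ∀ w : Fin k → (Fin (l + k) → ℝ), g w = ∑ i, c i * f i w := by
      intro w
      rw [hgdef]
      induction (Finset.univ : Finset (Fin m)) using Finset.induction_on with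
      | empty => simp
      | insert _ _ hx ih =>
        rw [Finset.sum_insert hx, Finset.sum_insert hx, AlternatingMap.add_apply, ih,
          AlternatingMap.smul_apply, smul_eq_mul]
    have hgS : ∀ S : {S : Finset (Fin (l + k)) // S.card = k},
        g (fun q => e (S.1.orderEmbOfFin S.2 q)) = 0 := by
      intro S
      have h1 := congrFun hc S
      rw [hgapp]
      simpa [u, Finset.sum_apply, smul_eq_mul] using h1
    have hg0 : g = 0 := by
      refine Module.Basis.ext_alternating e ?_
      intro v hv
      have hS : (Finset.univ.image v).card = k := by
        rw [Finset.card_image_of_injective _ hv, Finset.card_univ, Fintype.card_fin]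
      set S : Finset (Fin (l + k)) := Finset.univ.image v with hSdef
      have hmem : ∀ q, v q ∈ S := fun q => Finset.mem_image.2 ⟨q, Finset.mem_univ q, rfl⟩
      set σ0 : Fin k → Fin k := fun q => (S.orderIsoOfFin hS).symm ⟨v q, hmem q⟩ with hσ0
      have hσ0inj : Function.Injective σ0 := by
        intro q₁ q₂ h
        apply hv
        have h2 := congrArg (fun z => ((S.orderIsoOfFin hS) z : Fin (l + k))) h
        simp only [hσ0, OrderIso.apply_symm_apply] at h2
        exact h2
      let σ : Equiv.Perm (Fin k) := Equiv.ofBijective σ0 (Finite.injective_iff_bijective.mp hσ0inj)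
      have hvw : ∀ q, v q = S.orderEmbOfFin hS (σ q) := by
        intro q
        rw [← Finset.coe_orderIsoOfFin_apply]
        show _ = ((S.orderIsoOfFin hS) (σ0 q) : Fin (l + k))
        rw [hσ0, OrderIso.apply_symm_apply]
      have key : (fun q => e (v q)) = (fun q => e (S.orderEmbOfFin hS q)) ∘ σ := by
        funext q
        simp only [Function.comp_apply, ← hvw q]
      rw [key, g.map_perm, hgS ⟨S, hS⟩, smul_zero]
      rfl
    have hsum : ∀ j, ∑ i, c i * f i (fun q => V (b j q)) = 0 := by
      intro j
      rw [← hgapp, hg0]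
      rfl
    have hcz : ∀ t : ℕ, ∀ j : Fin m, j.val = t → c j = 0 := by
      intro t
      induction t using Nat.strong_induction_on with
      | _ t IH =>
        intro j hj
        have h0 := hsum j
        rw [Finset.sum_eq_single j] at h0
        · rcases mul_eq_zero.mp h0 with h | h
          · exact h
          · exact absurd h (hnonzero j)
        · intro i _ hij
          rcases lt_or_gt_of_ne hij with hlt | hgt
          · rw [IH i.val (by omega) i rfl, zero_mul]
          · rw [hzero i j (hcross i j hgt), mul_zero]
        · intro h
          exact absurd (Finset.mem_univ j) h
    exact fun j => hcz j.val j rfl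
  have hcard := hu.fintype_card_le_finrank
  rw [Fintype.card_fin, Module.finrank_pi, Fintype.card_finset_len, Fintype.card_fin] at hcard
  rwa [Nat.add_comm l k, Nat.choose_symm_add] at hcard

/-- **Theorem (Frankl; Kalai): skew Bollobás set-pair inequality.** If
`A₁, …, A_m` have cardinality at most `l`, `B₁, …, B_m` have cardinality at most
`k`, `A i ∩ B i = ∅` for all `i`, and `A i ∩ B j ≠ ∅` whenever `i > j`, then
`m ≤ (k+l).choose l`. -/
theorem frankl_kalai {α : Type*} [DecidableEq α] (k l m : ℕ)
    (A B : Fin m → Finset α)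
    (hA : ∀ i, (A i).card ≤ l) (hB : ∀ i, (B i).card ≤ k)
    (hdisj : ∀ i, A i ∩ B i = ∅)
    (hcross : ∀ i j, j < i → A i ∩ B j ≠ ∅) :
    m ≤ (k + l).choose l := by
  classical
  set U : Finset α := Finset.univ.biUnion (fun i => A i ∪ B i) with hU
  have hAU : ∀ i, A i ⊆ U := fun i x hx =>
    Finset.mem_biUnion.2 ⟨i, Finset.mem_univ i, Finset.mem_union_left _ hx⟩
  have hBU : ∀ i, B i ⊆ U := fun i x hx =>
    Finset.mem_biUnion.2 ⟨i, Finset.mem_univ i, Finset.mem_union_right _ hx⟩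
  let ψ : α → ℕ := fun x => if h : x ∈ U then (U.equivFin ⟨x, h⟩ : ℕ) else 0
  have hψlt : ∀ x ∈ U, ψ x < U.card := by
    intro x hx
    simp only [ψ, dif_pos hx]
    exact (U.equivFin ⟨x, hx⟩).2
  have hψinj : ∀ x ∈ U, ∀ y ∈ U, ψ x = ψ y → x = y := by
    intro x hx y hy h
    simp only [ψ, dif_pos hx, dif_pos hy] at h
    have := U.equivFin.injective (Fin.ext h)
    exact Subtype.ext_iff.mp this
  let A' : Fin m → Finset ℕ := fun i =>
    (A i).image ψ ∪ (Finset.range (l - (A i).card)).image (fun t => U.card + (i.val * l + t))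
  let B' : Fin m → Finset ℕ := fun i =>
    (B i).image ψ ∪ (Finset.range (k - (B i).card)).image (fun t => U.card + m * l + (i.val * k + t))
  have hApadlt : ∀ i : Fin m, ∀ t, t < l - (A i).card → i.val * l + t < m * l := by
    intro i t ht
    have h1 : t < l := lt_of_lt_of_le ht (Nat.sub_le _ _)
    calc i.val * l + t < i.val * l + l := by omega
    _ = (i.val + 1) * l := by ring
    _ ≤ m * l := Nat.mul_le_mul_right l i.2
  have hmemA' : ∀ i x, x ∈ A' i ↔
      ((∃ a ∈ A i, ψ a = x) ∨ ∃ t < l - (A i).card, x = U.card + (i.val * l + t)) := by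
    intro i x
    simp [A', Finset.mem_union, Finset.mem_image, Finset.mem_range, eq_comm]
  have hmemB' : ∀ i x, x ∈ B' i ↔
      ((∃ b ∈ B i, ψ b = x) ∨ ∃ t < k - (B i).card, x = U.card + m * l + (i.val * k + t)) := by
    intro i x
    simp [B', Finset.mem_union, Finset.mem_image, Finset.mem_range, eq_comm]
  have hcardA : ∀ i, (A' i).card = l := by
    intro i
    rw [Finset.card_union_of_disjoint, Finset.card_image_of_injOn,
      Finset.card_image_of_injective, Finset.card_range]
    · have := hA i; omega
    · intro t1 t2 h; simpa using h
    · intro x hx y hy h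
      exact hψinj x (hAU i hx) y (hAU i hy) h
    · rw [Finset.disjoint_left]
      rintro x hx hy
      obtain ⟨a, ha, rfl⟩ := Finset.mem_image.1 hx
      obtain ⟨t, ht, h⟩ := Finset.mem_image.1 hy
      have := hψlt a (hAU i ha)
      omega
  have hcardB : ∀ i, (B' i).card = k := by
    intro i
    rw [Finset.card_union_of_disjoint, Finset.card_image_of_injOn,
      Finset.card_image_of_injective, Finset.card_range]
    · have := hB i; omega
    · intro t1 t2 h; simpa using h
    · intro x hx y hy h
      exact hψinj x (hBU i hx) y (hBU i hy) h
    · rw [Finset.disjoint_left]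
      rintro x hx hy
      obtain ⟨a, ha, rfl⟩ := Finset.mem_image.1 hx
      obtain ⟨t, ht, h⟩ := Finset.mem_image.1 hy
      have := hψlt a (hBU i ha)
      omega
  have hdisj' : ∀ i, A' i ∩ B' i = ∅ := by
    intro i
    rw [Finset.eq_empty_iff_forall_notMem]
    intro x hx
    rw [Finset.mem_inter] at hx
    rcases (hmemA' i x).1 hx.1 with ⟨a, ha, rfl⟩ | ⟨t, ht, rfl⟩ <;>
      rcases (hmemB' i _).1 hx.2 with ⟨b, hb, hb'⟩ | ⟨s, hs, hs'⟩
    · have : a = b := hψinj a (hAU i ha) b (hBU i hb) hb'.symm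
      subst this
      have : a ∈ A i ∩ B i := Finset.mem_inter.2 ⟨ha, hb⟩
      rw [hdisj i] at this
      exact Finset.notMem_empty _ this
    · have := hψlt a (hAU i ha); omega
    · have := hψlt b (hBU i hb); omega
    · have := hApadlt i t ht; omega
  have hcross' : ∀ i j, j < i → (A' i ∩ B' j).Nonempty := by
    intro i j hij
    have h := hcross i j hij
    rw [← Finset.nonempty_iff_ne_empty] at h
    obtain ⟨x, hx⟩ := h
    rw [Finset.mem_inter] at hx
    exact ⟨ψ x, Finset.mem_inter.2 ⟨(hmemA' i _).2 (Or.inl ⟨x, hx.1, rfl⟩),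
      (hmemB' j _).2 (Or.inl ⟨x, hx.2, rfl⟩)⟩⟩
  exact FK.aux k l m A' B' hcardA hcardB hdisj' hcross'
end

section
/- Let 𝓗 = {H₁, H₂, …, H_m} be a reduced collection of m pairwise distinct sets. Then the union H₁ ∪ H₂ ∪ … ∪ H_m has at most m−1 elements. -/
/-- **Lemma (Kogan).** The union of a reduced collection of `m` pairwise distinct
sets has at most `m - 1` elements.  (A collection is *reduced* if for every element
`x` of the union, there are two distinct indices `i ≠ j` with
`H i \ {x} = H j \ {x}`.) -/
theorem reduced_union_card_le {α : Type*} (m : ℕ) (H : Fin m → Set α)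
    (hinj : Function.Injective H)
    (hred : ∀ x ∈ ⋃ i, H i, ∃ i j, i ≠ j ∧ H i \ {x} = H j \ {x}) :
    (⋃ i, H i).encard ≤ ((m - 1 : ℕ) : ℕ∞) := by
  classical
  set U : Set α := ⋃ i, H i with hU
  rcases U.eq_empty_or_nonempty with hUe | hUne
  · simp [hUe]
  obtain ⟨x₀, hx₀⟩ := hUne
  obtain ⟨i₀, _, _⟩ := hred x₀ hx₀
  have choice : ∀ x : U, ∃ p : Fin m × Fin m,
      p.1 ≠ p.2 ∧ H p.1 \ {(x : α)} = H p.2 \ {(x : α)} := by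
    rintro ⟨x, hx⟩
    obtain ⟨i, j, hij, h⟩ := hred x hx
    exact ⟨(i, j), hij, h⟩
  choose p hp1 hp2 using choice
  -- basic consequence of `H i \ {x} = H j \ {x}` : membership agrees away from x
  have hsets : ∀ (x : U) (b : α), b ≠ (x : α) →
      (b ∈ H (p x).1 ↔ b ∈ H (p x).2) := by
    intro x b hb
    have := Set.ext_iff.mp (hp2 x) b
    simp only [Set.mem_diff, Set.mem_singleton_iff] at this
    tauto
  have hne : ∀ x : U, H (p x).1 ≠ H (p x).2 := fun x h => hp1 x (hinj h)
  -- membership at x itself differs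
  have hmem : ∀ x : U, ((x : α) ∈ H (p x).1 ↔ ¬ (x : α) ∈ H (p x).2) := by
    intro x
    have hnotiff : ¬ ((x : α) ∈ H (p x).1 ↔ (x : α) ∈ H (p x).2) := by
      intro hiffx
      apply hne x
      ext b
      by_cases hb : b = (x : α)
      · subst hb; exact hiffx
      · exact hsets x b hb
    tauto
  -- injectivity of the pair map, hence U is finite
  have hpinj : Function.Injective p := by
    rintro x y hxy
    by_contra hns
    have hxy' : (x : α) ≠ (y : α) := fun h => hns (Subtype.ext h)
    apply hne y
    ext b
    by_cases hb : b = (x : α)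
    · have hby : b ≠ (y : α) := by rw [hb]; exact hxy'
      exact hsets y b hby
    · have := hsets x b hb
      rwa [hxy] at this
  have hfinU : Finite U := Finite.of_injective p hpinj
  have hfin : U.Finite := Set.finite_coe_iff.mp hfinU
  -- indicator vectors over GF(2)
  let χ : Set α → (α → ZMod 2) := fun s a => if a ∈ s then 1 else 0
  let g : Fin m → (α → ZMod 2) := fun i => χ (H i) - χ (H i₀)
  let s : Finset (α → ZMod 2) := (Finset.univ.erase i₀).image g
  let W : Submodule (ZMod 2) (α → ZMod 2) := Submodule.span (ZMod 2) (s : Set (α → ZMod 2))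
  have hgW : ∀ k, g k ∈ W := by
    intro k
    by_cases hk : k = i₀
    · subst hk
      have : g k = 0 := by simp [g]
      rw [this]; exact W.zero_mem
    · exact Submodule.subset_span (Finset.mem_coe.mpr
        (Finset.mem_image.mpr ⟨k, Finset.mem_erase.mpr ⟨hk, Finset.mem_univ k⟩, rfl⟩))
  let e : α → (α → ZMod 2) := fun x => Pi.single x 1
  -- pointwise computation
  have key2 : ∀ (x : U) (a : α),
      χ (H (p x).1) a - χ (H (p x).2) a = e (x : α) a := by
    intro x a
    by_cases hax : a = (x : α)
    · rw [hax]
      by_cases h1 : (x : α) ∈ H (p x).1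
      · have h2 : (x : α) ∉ H (p x).2 := (hmem x).mp h1
        simp [χ, e, h1, h2, Pi.single_apply]
      · have h2 : (x : α) ∈ H (p x).2 := by
          by_contra h2; exact h1 ((hmem x).mpr h2)
        simp only [χ, e, if_neg h1, if_pos h2, Pi.single_apply, if_pos rfl]
        decide
    · have hiff := hsets x a hax
      by_cases h1 : a ∈ H (p x).1
      · simp [χ, e, h1, hiff.mp h1, Pi.single_apply, hax]
      · have h2 : a ∉ H (p x).2 := fun h => h1 (hiff.mpr h)
        simp [χ, e, h1, h2, Pi.single_apply, hax]
  have heW : ∀ x : U, e (x : α) ∈ W := by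
    intro x
    have key : e (x : α) = g (p x).1 - g (p x).2 := by
      funext a
      have := key2 x a
      simp only [g, Pi.sub_apply]
      rw [← this]
      ring
    rw [key]
    exact W.sub_mem (hgW _) (hgW _)
  -- linear independence of the standard basis vectors
  have hli0 : LinearIndependent (ZMod 2)
      (fun x : α => (Finsupp.single x (1 : ZMod 2) : α →₀ ZMod 2)) :=
    Finsupp.basisSingleOne.linearIndependent
  let L : (α →₀ ZMod 2) →ₗ[ZMod 2] (α → ZMod 2) :=
    Finsupp.lcoeFun (α := α) (M := ZMod 2) (R := ZMod 2)
  have hker : LinearMap.ker L = ⊥ :=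
    LinearMap.ker_eq_bot.mpr (by exact DFunLike.coe_injective)
  have hli1 : LinearIndependent (ZMod 2)
      (fun x : α => L (Finsupp.single x (1 : ZMod 2))) :=
    hli0.map' L hker
  have hli2 : LinearIndependent (ZMod 2) e := by
    have : (fun x : α => (L (Finsupp.single x (1 : ZMod 2)) : α → ZMod 2)) = e := by
      funext x a
      simp only [L, e, Finsupp.lcoeFun, Finsupp.single_apply, Pi.single_apply,
        LinearMap.coe_mk, AddHom.coe_mk]
      by_cases h : x = a
      · simp [h]
      · simp [h, Ne.symm h]
    rwa [this] at hli1
  have hliU : LinearIndependent (ZMod 2) (fun x : U => e (x : α)) :=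
    hli2.comp _ Subtype.coe_injective
  have hliW : LinearIndependent (ZMod 2) (fun x : U => (⟨e (x : α), heW x⟩ : W)) := by
    apply LinearIndependent.of_comp W.subtype
    convert hliU
    rfl
  haveI : Fintype U := hfin.fintype
  haveI : FiniteDimensional (ZMod 2) W := FiniteDimensional.span_finset _ s
  have hcard : Fintype.card U ≤ Module.finrank (ZMod 2) W :=
    hliW.fintype_card_le_finrank
  have hrk : Module.finrank (ZMod 2) W ≤ m - 1 := by
    have h1 : Module.finrank (ZMod 2) W ≤ s.card := by
      simpa [W, Set.finrank] using finrank_span_finset_le_card (R := ZMod 2) s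
    have h2 : s.card ≤ m - 1 := by
      calc s.card ≤ (Finset.univ.erase i₀).card := Finset.card_image_le
        _ = m - 1 := by simp [Finset.card_erase_of_mem]
    exact h1.trans h2
  have hcardU : U.encard = (Fintype.card U : ℕ∞) := by
    rw [hfin.encard_eq_coe_toFinset_card]
    congr 1
    simp [Set.Finite.card_toFinset]
  rw [hcardU]
  exact_mod_cast hcard.trans hrk
end

section
/- Let 𝓗 be a reduced collection of pairwise distinct sets in which the 2×3 matrix with rows 000 and 111 can be found, i.e. there exist sets H, H' in 𝓗 and three distinct elements e₁, e₂, e₃ of ⋃𝓗 such that {e₁,e₂,e₃} ∩ H = ∅ and {e₁,e₂,e₃} ⊆ H'. Then at least one of the 3-singleton matrix S³, the 3-cosingleton matrix S̄³, and the 3-monotone matrix M³ can be found in 𝓗. -/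
/-- A collection of sets is *reduced* if every element of the union is useful to
make the sets distinct: for every `x ∈ ⋃₀ 𝓗` there are two distinct sets `A ≠ B`
of `𝓗` with `A \ {x} = B \ {x}`. -/
def Reduced {α : Type*} (𝓗 : Set (Set α)) : Prop :=
  ∀ x ∈ ⋃₀ 𝓗, ∃ A ∈ 𝓗, ∃ B ∈ 𝓗, A ≠ B ∧ A \ {x} = B \ {x}

section Helpers
variable {α : Type*} {𝓗 : Set (Set α)}

lemma foundIn_intro (N : Fin 4 → Fin 3 → Prop)
    (hrows : ∀ i i' : Fin 4, (∀ j, N i j ↔ N i' j) → i = i')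
    (H : Fin 4 → Set α) (e : Fin 3 → α)
    (he : Function.Injective e)
    (hH : ∀ i, H i ∈ 𝓗) (hu : ∀ j, e j ∈ ⋃₀ 𝓗)
    (hiff : ∀ i j, e j ∈ H i ↔ N i j) : FoundIn N 𝓗 := by
  refine ⟨H, e, ?_, he, hH, hu, hiff⟩
  intro i i' hHe
  exact hrows i i' fun j => by rw [← hiff, ← hiff, hHe]

lemma inj3 {x y z : α} (hxy : x ≠ y) (hxz : x ≠ z) (hyz : y ≠ z) :
    Function.Injective ![x, y, z] := by
  intro j j' h
  fin_cases j <;> fin_cases j' <;> simp_all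

lemma mono_case (W0 W1 W2 W3 : Set α) (x y z : α)
    (h0 : W0 ∈ 𝓗) (h1 : W1 ∈ 𝓗) (h2 : W2 ∈ 𝓗) (h3 : W3 ∈ 𝓗)
    (hx : x ∈ ⋃₀ 𝓗) (hy : y ∈ ⋃₀ 𝓗) (hz : z ∈ ⋃₀ 𝓗)
    (hxy : x ≠ y) (hxz : x ≠ z) (hyz : y ≠ z)
    (m00 : x ∉ W0) (m01 : y ∉ W0) (m02 : z ∉ W0)
    (m10 : x ∈ W1) (m11 : y ∉ W1) (m12 : z ∉ W1)
    (m20 : x ∈ W2) (m21 : y ∈ W2) (m22 : z ∉ W2)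
    (m30 : x ∈ W3) (m31 : y ∈ W3) (m32 : z ∈ W3) :
    FoundIn (monotoneMatrix 3) 𝓗 := by
  apply foundIn_intro _ (by unfold monotoneMatrix; decide) ![W0,W1,W2,W3] ![x,y,z]
    (inj3 hxy hxz hyz)
    (fun i => by fin_cases i <;> assumption)
    (fun j => by fin_cases j <;> assumption)
  intro i j
  fin_cases i <;> fin_cases j <;> simp [monotoneMatrix] <;> assumption

lemma singleton_case (W0 W1 W2 W3 : Set α) (x y z : α)
    (h0 : W0 ∈ 𝓗) (h1 : W1 ∈ 𝓗) (h2 : W2 ∈ 𝓗) (h3 : W3 ∈ 𝓗)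
    (hx : x ∈ ⋃₀ 𝓗) (hy : y ∈ ⋃₀ 𝓗) (hz : z ∈ ⋃₀ 𝓗)
    (hxy : x ≠ y) (hxz : x ≠ z) (hyz : y ≠ z)
    (m00 : x ∉ W0) (m01 : y ∉ W0) (m02 : z ∉ W0)
    (m10 : x ∈ W1) (m11 : y ∉ W1) (m12 : z ∉ W1)
    (m20 : x ∉ W2) (m21 : y ∈ W2) (m22 : z ∉ W2)
    (m30 : x ∉ W3) (m31 : y ∉ W3) (m32 : z ∈ W3) :
    FoundIn (singletonMatrix 3) 𝓗 := by
  apply foundIn_intro _ (by unfold singletonMatrix; decide) ![W0,W1,W2,W3] ![x,y,z]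
    (inj3 hxy hxz hyz)
    (fun i => by fin_cases i <;> assumption)
    (fun j => by fin_cases j <;> assumption)
  intro i j
  fin_cases i <;> fin_cases j <;> simp [singletonMatrix] <;> assumption

lemma cosingleton_case (W0 W1 W2 W3 : Set α) (x y z : α)
    (h0 : W0 ∈ 𝓗) (h1 : W1 ∈ 𝓗) (h2 : W2 ∈ 𝓗) (h3 : W3 ∈ 𝓗)
    (hx : x ∈ ⋃₀ 𝓗) (hy : y ∈ ⋃₀ 𝓗) (hz : z ∈ ⋃₀ 𝓗)
    (hxy : x ≠ y) (hxz : x ≠ z) (hyz : y ≠ z)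
    (m00 : x ∉ W0) (m01 : y ∈ W0) (m02 : z ∈ W0)
    (m10 : x ∈ W1) (m11 : y ∉ W1) (m12 : z ∈ W1)
    (m20 : x ∈ W2) (m21 : y ∈ W2) (m22 : z ∉ W2)
    (m30 : x ∈ W3) (m31 : y ∈ W3) (m32 : z ∈ W3) :
    FoundIn (cosingletonMatrix 3) 𝓗 := by
  apply foundIn_intro _ (by unfold cosingletonMatrix; decide) ![W0,W1,W2,W3] ![x,y,z]
    (inj3 hxy hxz hyz)
    (fun i => by fin_cases i <;> assumption)
    (fun j => by fin_cases j <;> assumption)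
  intro i j
  fin_cases i <;> fin_cases j <;> simp [cosingletonMatrix] <;> assumption

lemma exists_pair (hred : Reduced 𝓗) {x : α} (hx : x ∈ ⋃₀ 𝓗) :
    ∃ S, S ∈ 𝓗 ∧ insert x S ∈ 𝓗 ∧ x ∉ S := by
  obtain ⟨A, hA, B, hB, hne, heq⟩ := hred x hx
  by_cases hxA : x ∈ A
  · by_cases hxB : x ∈ B
    · exfalso
      apply hne
      have h1 : insert x (A \ {x}) = A := by
        rw [Set.insert_diff_singleton, Set.insert_eq_self.mpr hxA]
      have h2 : insert x (B \ {x}) = B := by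
        rw [Set.insert_diff_singleton, Set.insert_eq_self.mpr hxB]
      rw [← h1, heq, h2]
    · refine ⟨B, hB, ?_, hxB⟩
      have hB' : insert x B = A := by
        rw [← Set.diff_singleton_eq_self hxB, ← heq, Set.insert_diff_singleton,
          Set.insert_eq_self.mpr hxA]
      rw [hB']; exact hA
  · by_cases hxB : x ∈ B
    · refine ⟨A, hA, ?_, hxA⟩
      have hA' : insert x A = B := by
        rw [← Set.diff_singleton_eq_self hxA, heq, Set.insert_diff_singleton,
          Set.insert_eq_self.mpr hxB]
      rw [hA']; exact hB
    · exfalso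
      apply hne
      rw [← Set.diff_singleton_eq_self hxA, heq, Set.diff_singleton_eq_self hxB]

end Helpers

/-- **Lemma.** If the `2 × 3` matrix with rows `000` and `111` can be found in a
reduced collection `𝓗`, then one of `S³`, `S̄³`, `M³` can be found in `𝓗`. -/
theorem reduced_000_111 {α : Type*} (𝓗 : Set (Set α)) (hred : Reduced 𝓗)
    (h : FoundIn (fun (i : Fin 2) (_ : Fin 3) => i = 1) 𝓗) :
    FoundIn (singletonMatrix 3) 𝓗 ∨ FoundIn (cosingletonMatrix 3) 𝓗 ∨
    FoundIn (monotoneMatrix 3) 𝓗 := by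
  classical
  obtain ⟨H, e, hHinj, heinj, hHmem, hu, hiff⟩ := h
  set L := H 0 with hL
  set U := H 1 with hU
  set a := e 0 with ha
  set b := e 1 with hb
  set c := e 2 with hc
  have hLmem : L ∈ 𝓗 := hHmem 0
  have hUmem : U ∈ 𝓗 := hHmem 1
  have hua : a ∈ ⋃₀ 𝓗 := hu 0
  have hub : b ∈ ⋃₀ 𝓗 := hu 1
  have huc : c ∈ ⋃₀ 𝓗 := hu 2
  have hab : a ≠ b := heinj.ne (by decide)
  have hac : a ≠ c := heinj.ne (by decide)
  have hbc : b ≠ c := heinj.ne (by decide)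
  have haL : a ∉ L := fun hm => absurd ((hiff 0 0).mp hm) (by decide)
  have hbL : b ∉ L := fun hm => absurd ((hiff 0 1).mp hm) (by decide)
  have hcL : c ∉ L := fun hm => absurd ((hiff 0 2).mp hm) (by decide)
  have haU : a ∈ U := (hiff 1 0).mpr rfl
  have hbU : b ∈ U := (hiff 1 1).mpr rfl
  have hcU : c ∈ U := (hiff 1 2).mpr rfl
  obtain ⟨Sa, hSa, hSa', haSa⟩ := exists_pair hred hua
  obtain ⟨Sb, hSb, hSb', hbSb⟩ := exists_pair hred hub
  obtain ⟨Sc, hSc, hSc', hcSc⟩ := exists_pair hred huc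
  have nmi : ∀ {x y : α} {S : Set α}, y ≠ x → y ∉ S → y ∉ insert x S :=
    fun h1 h2 hm => (Set.mem_insert_iff.mp hm).elim h1 h2
  have mi : ∀ {x y : α} {S : Set α}, y ∈ S → y ∈ insert x S :=
    fun h => Set.mem_insert_of_mem _ h
  by_cases hab' : b ∈ Sa
  · by_cases hac' : c ∈ Sa
    · -- Sa has type 2 : b, c ∈ Sa, a ∉ Sa
      by_cases hba' : a ∈ Sb
      · by_cases hbc' : c ∈ Sb
        · -- Sb type 2
          by_cases hca' : a ∈ Sc
          · by_cases hcb' : b ∈ Sc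
            · -- all type 2 : cosingleton
              right; left
              exact cosingleton_case Sa Sb Sc U a b c hSa hSb hSc hUmem hua hub huc
                hab hac hbc
                haSa hab' hac'  hba' hbSb hbc'  hca' hcb' hcSc  haU hbU hcU
            · -- Sc type 1 (a ∈, b ∉): M³, elems (a, c, b), sets L, Sc, insert c Sc, U
              right; right
              exact mono_case L Sc (insert c Sc) U a c b hLmem hSc hSc' hUmem hua huc hub
                hac hab hbc.symm
                haL hcL hbL  hca' hcSc hcb'
                (mi hca') (Set.mem_insert _ _) (nmi hbc hcb')
                haU hcU hbU
          · by_cases hcb' : b ∈ Sc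
            · -- Sc type 1 (b ∈, a ∉): elems (b, c, a)
              right; right
              exact mono_case L Sc (insert c Sc) U b c a hLmem hSc hSc' hUmem hub huc hua
                hbc hab.symm hac.symm
                hbL hcL haL  hcb' hcSc hca'
                (mi hcb') (Set.mem_insert _ _) (nmi hac hca')
                hbU hcU haU
            · -- Sc type 0, Sa type 2: mixed, elems (c, b, a)
              right; right
              exact mono_case L (insert c Sc) Sa (insert a Sa) c b a hLmem hSc' hSa hSa'
                huc hub hua hbc.symm hac.symm hab.symm
                hcL hbL haL
                (Set.mem_insert _ _) (nmi hbc hcb') (nmi hac hca')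
                hac' hab' haSa
                (mi hac') (mi hab') (Set.mem_insert _ _)
        · -- Sb type 1 (a ∈, c ∉): elems (a, b, c)
          right; right
          exact mono_case L Sb (insert b Sb) U a b c hLmem hSb hSb' hUmem hua hub huc
            hab hac hbc
            haL hbL hcL  hba' hbSb hbc'
            (mi hba') (Set.mem_insert _ _) (nmi hbc.symm hbc')
            haU hbU hcU
      · by_cases hbc' : c ∈ Sb
        · -- Sb type 1 (c ∈, a ∉): elems (c, b, a)
          right; right
          exact mono_case L Sb (insert b Sb) U c b a hLmem hSb hSb' hUmem huc hub hua
            hbc.symm hac.symm hab.symm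
            hcL hbL haL  hbc' hbSb hba'
            (mi hbc') (Set.mem_insert _ _) (nmi hab hba')
            hcU hbU haU
        · -- Sb type 0, Sa type 2: mixed, elems (b, c, a)
          right; right
          exact mono_case L (insert b Sb) Sa (insert a Sa) b c a hLmem hSb' hSa hSa'
            hub huc hua hbc hab.symm hac.symm
            hbL hcL haL
            (Set.mem_insert _ _) (nmi hbc.symm hbc') (nmi hab hba')
            hab' hac' haSa
            (mi hab') (mi hac') (Set.mem_insert _ _)
    · -- Sa type 1 (b ∈, c ∉): elems (b, a, c)
      right; right
      exact mono_case L Sa (insert a Sa) U b a c hLmem hSa hSa' hUmem hub hua huc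
        hab.symm hbc hac
        hbL haL hcL  hab' haSa hac'
        (mi hab') (Set.mem_insert _ _) (nmi hac.symm hac')
        hbU haU hcU
  · by_cases hac' : c ∈ Sa
    · -- Sa type 1 (c ∈, b ∉): elems (c, a, b)
      right; right
      exact mono_case L Sa (insert a Sa) U c a b hLmem hSa hSa' hUmem huc hua hub
        hac.symm hbc.symm hab
        hcL haL hbL  hac' haSa hab'
        (mi hac') (Set.mem_insert _ _) (nmi hab.symm hab')
        hcU haU hbU
    · -- Sa type 0
      by_cases hba' : a ∈ Sb
      · by_cases hbc' : c ∈ Sb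
        · -- Sb type 2, Sa type 0: mixed, elems (a, c, b)
          right; right
          exact mono_case L (insert a Sa) Sb (insert b Sb) a c b hLmem hSa' hSb hSb'
            hua huc hub hac hab hbc.symm
            haL hcL hbL
            (Set.mem_insert _ _) (nmi hac.symm hac') (nmi hab.symm hab')
            hba' hbc' hbSb
            (mi hba') (mi hbc') (Set.mem_insert _ _)
        · -- Sb type 1 (a ∈, c ∉): elems (a, b, c)
          right; right
          exact mono_case L Sb (insert b Sb) U a b c hLmem hSb hSb' hUmem hua hub huc
            hab hac hbc
            haL hbL hcL  hba' hbSb hbc'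
            (mi hba') (Set.mem_insert _ _) (nmi hbc.symm hbc')
            haU hbU hcU
      · by_cases hbc' : c ∈ Sb
        · -- Sb type 1 (c ∈, a ∉): elems (c, b, a)
          right; right
          exact mono_case L Sb (insert b Sb) U c b a hLmem hSb hSb' hUmem huc hub hua
            hbc.symm hac.symm hab.symm
            hcL hbL haL  hbc' hbSb hba'
            (mi hbc') (Set.mem_insert _ _) (nmi hab hba')
            hcU hbU haU
        · -- Sb type 0
          by_cases hca' : a ∈ Sc
          · by_cases hcb' : b ∈ Sc
            · -- Sc type 2, Sa type 0: mixed, elems (a, b, c)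
              right; right
              exact mono_case L (insert a Sa) Sc (insert c Sc) a b c hLmem hSa' hSc hSc'
                hua hub huc hab hac hbc
                haL hbL hcL
                (Set.mem_insert _ _) (nmi hab.symm hab') (nmi hac.symm hac')
                hca' hcb' hcSc
                (mi hca') (mi hcb') (Set.mem_insert _ _)
            · -- Sc type 1 (a ∈, b ∉): elems (a, c, b)
              right; right
              exact mono_case L Sc (insert c Sc) U a c b hLmem hSc hSc' hUmem hua huc hub
                hac hab hbc.symm
                haL hcL hbL  hca' hcSc hcb'
                (mi hca') (Set.mem_insert _ _) (nmi hbc hcb')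
                haU hcU hbU
          · by_cases hcb' : b ∈ Sc
            · -- Sc type 1 (b ∈, a ∉): elems (b, c, a)
              right; right
              exact mono_case L Sc (insert c Sc) U b c a hLmem hSc hSc' hUmem hub huc hua
                hbc hab.symm hac.symm
                hbL hcL haL  hcb' hcSc hca'
                (mi hcb') (Set.mem_insert _ _) (nmi hac hca')
                hbU hcU haU
            · -- all type 0: singleton
              left
              exact singleton_case L (insert a Sa) (insert b Sb) (insert c Sc) a b c
                hLmem hSa' hSb' hSc' hua hub huc hab hac hbc
                haL hbL hcL
                (Set.mem_insert _ _) (nmi hab.symm hab') (nmi hac.symm hac')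
                (nmi hab hba') (Set.mem_insert _ _) (nmi hbc.symm hbc')
                (nmi hac hca') (nmi hbc hcb') (Set.mem_insert _ _)
end
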